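/- arXiv:2001.11568 — 5 statements merged into one kernel-verified Lean document; each statement's English description precedes it below -/
import Mathlib

section
/- Let g : ℝ^d → ℝ be L-Lipschitz and δ > 0. Define the smoothed function ĝ(y) = E_{v ~ μ_B}[g(y + v/δ)], where μ_B is the uniform probability measure on the closed unit ball of ℝ^d. Then ĝ is differentiable on ℝ^d and its gradient ∇ĝ is (δ d L)-Lipschitz, i.e. ‖∇ĝ(y₁) − ∇ĝ(y₂)‖ ≤ δ d L ‖y₁ − y₂‖ for all y₁, y₂ ∈ ℝ^d; that is, ĝ is (δ d L)-smooth. -/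
open Set Metric MeasureTheory
open scoped RealInnerProductSpace

/-- The uniform probability measure on the closed unit ball of `ℝ^d`. -/
noncomputable def uniformBallMeasure (d : ℕ) : Measure (EuclideanSpace ℝ (Fin d)) :=
  (volume (Metric.closedBall (0 : EuclideanSpace ℝ (Fin d)) 1))⁻¹ •
    (volume.restrict (Metric.closedBall (0 : EuclideanSpace ℝ (Fin d)) 1))

open Filter
open scoped Topology NNReal ENNReal

namespace SmoothingLemmaAux

variable {d : ℕ}

local notation "κ" d => volume (Metric.closedBall (0 : EuclideanSpace ℝ (Fin d)) 1)

lemma kappa_ne_zero (d : ℕ) : volume (Metric.closedBall (0 : EuclideanSpace ℝ (Fin d)) 1) ≠ 0 :=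
  (measure_closedBall_pos volume 0 one_pos).ne'

lemma kappa_ne_top (d : ℕ) : volume (Metric.closedBall (0 : EuclideanSpace ℝ (Fin d)) 1) ≠ ⊤ :=
  measure_closedBall_lt_top.ne

lemma ubm_finite (d : ℕ) : IsFiniteMeasure (uniformBallMeasure d) := by
  constructor
  rw [uniformBallMeasure, Measure.smul_apply, Measure.restrict_apply_univ, smul_eq_mul,
    ENNReal.inv_mul_cancel (kappa_ne_zero d) (kappa_ne_top d)]
  exact ENNReal.one_lt_top

lemma ubm_ac (d : ℕ) :
    uniformBallMeasure d ≪ (volume : Measure (EuclideanSpace ℝ (Fin d))) := by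
  refine Measure.AbsolutelyContinuous.mk fun s hs h0 => ?_
  rw [uniformBallMeasure, Measure.smul_apply, Measure.restrict_apply hs,
    measure_mono_null inter_subset_left h0]
  simp

lemma ubm_ae_mem (d : ℕ) :
    ∀ᵐ v ∂(uniformBallMeasure d), v ∈ Metric.closedBall (0 : EuclideanSpace ℝ (Fin d)) 1 := by
  rw [uniformBallMeasure]
  exact Measure.ae_smul_measure (ae_restrict_mem measurableSet_closedBall) _

/-- Differentiability of the smoothed function, with derivative given by
differentiating under the integral sign (using Rademacher's theorem). -/
lemma smoothed_hasFDerivAt {δ : ℝ} (hδ : 0 < δ)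
    (g : EuclideanSpace ℝ (Fin d) → ℝ) {C : ℝ≥0} (hL : LipschitzWith C g)
    (y : EuclideanSpace ℝ (Fin d)) :
    HasFDerivAt (fun y' => ∫ v, g (y' + δ⁻¹ • v) ∂(uniformBallMeasure d))
      (∫ v, fderiv ℝ g (y + δ⁻¹ • v) ∂(uniformBallMeasure d)) y := by
  haveI := ubm_finite d
  have hgc : Continuous g := hL.continuous
  have hδi : (0:ℝ) < δ⁻¹ := inv_pos.2 hδ
  have hF_meas : ∀ x : EuclideanSpace ℝ (Fin d),
      AEStronglyMeasurable (fun v => g (x + δ⁻¹ • v)) (uniformBallMeasure d) := fun x =>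
    (hgc.comp (continuous_const.add (continuous_id.const_smul δ⁻¹))).aestronglyMeasurable
  have hF_int : Integrable (fun v => g (y + δ⁻¹ • v)) (uniformBallMeasure d) := by
    refine (integrable_const ((C : ℝ) * δ⁻¹ + ‖g y‖)).mono' (hF_meas y) ?_
    filter_upwards [ubm_ae_mem d] with v hv
    have h1 : ‖g (y + δ⁻¹ • v)‖ ≤ ‖g (y + δ⁻¹ • v) - g y‖ + ‖g y‖ := by
      have := norm_add_le (g (y + δ⁻¹ • v) - g y) (g y)
      simpa using this
    have h2 : ‖g (y + δ⁻¹ • v) - g y‖ ≤ (C : ℝ) * δ⁻¹ := by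
      have := hL.dist_le_mul (y + δ⁻¹ • v) y
      rw [Real.dist_eq, dist_eq_norm] at this
      refine le_trans (le_of_eq (by rw [Real.norm_eq_abs])) (this.trans ?_)
      have : ‖y + δ⁻¹ • v - y‖ = δ⁻¹ * ‖v‖ := by
        rw [add_sub_cancel_left, norm_smul, Real.norm_eq_abs, abs_of_pos hδi]
      rw [this]
      have hv1 : ‖v‖ ≤ 1 := mem_closedBall_zero_iff.1 hv
      calc (C:ℝ) * (δ⁻¹ * ‖v‖) ≤ (C:ℝ) * (δ⁻¹ * 1) := by
            exact mul_le_mul_of_nonneg_left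
              (mul_le_mul_of_nonneg_left hv1 hδi.le) (C.coe_nonneg)
        _ = (C:ℝ) * δ⁻¹ := by ring
    linarith
  have hF'_meas : AEStronglyMeasurable
      (fun v => fderiv ℝ g (y + δ⁻¹ • v)) (uniformBallMeasure d) := by
    refine Measurable.aestronglyMeasurable ?_
    exact (measurable_fderiv ℝ g).comp (measurable_const.add (measurable_id.const_smul δ⁻¹))
  have h_lip : ∀ᵐ v ∂(uniformBallMeasure d),
      LipschitzOnWith (Real.nnabs ((fun _ : EuclideanSpace ℝ (Fin d) => (C : ℝ)) v))
        (fun x => g (x + δ⁻¹ • v)) (Metric.ball y 1) := by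
    refine Eventually.of_forall fun v => ?_
    have h1 : LipschitzWith C (fun x : EuclideanSpace ℝ (Fin d) => g (x + δ⁻¹ • v)) := by
      have h2 : LipschitzWith 1 (fun x : EuclideanSpace ℝ (Fin d) => x + δ⁻¹ • v) :=
        (Isometry.lipschitz (isometry_add_right (δ⁻¹ • v)))
      have h3 := hL.comp h2
      rw [mul_one] at h3
      exact h3
    have : Real.nnabs ((C : ℝ)) = C := by
      ext; rw [Real.coe_nnabs, abs_of_nonneg C.coe_nonneg]
    rw [this]
    exact h1.lipschitzOnWith
  have h_diff : ∀ᵐ v ∂(uniformBallMeasure d),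
      HasFDerivAt (fun x => g (x + δ⁻¹ • v)) (fderiv ℝ g (y + δ⁻¹ • v)) y := by
    have h1 : ∀ᵐ x ∂(volume : Measure (EuclideanSpace ℝ (Fin d))),
        DifferentiableAt ℝ g x := hL.ae_differentiableAt
    rw [ae_iff] at h1
    have h2 : volume ((fun v : EuclideanSpace ℝ (Fin d) => y + δ⁻¹ • v) ⁻¹'
        {x | ¬DifferentiableAt ℝ g x}) = 0 := by
      have hco : (fun v : EuclideanSpace ℝ (Fin d) => y + δ⁻¹ • v)
          = (fun u : EuclideanSpace ℝ (Fin d) => y + u) ∘ (fun v => δ⁻¹ • v) := rfl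
      rw [hco, preimage_comp, Measure.addHaar_preimage_smul volume hδi.ne',
        measure_preimage_add, h1, mul_zero]
    have h3 : ∀ᵐ v ∂(uniformBallMeasure d), DifferentiableAt ℝ g (y + δ⁻¹ • v) := by
      rw [ae_iff]
      exact (ubm_ac d) h2
    filter_upwards [h3] with v hv
    have h4 : HasFDerivAt (fun x : EuclideanSpace ℝ (Fin d) => x + δ⁻¹ • v)
        (ContinuousLinearMap.id ℝ (EuclideanSpace ℝ (Fin d))) y :=
      (hasFDerivAt_id y).add_const _
    have h5 := hv.hasFDerivAt.comp y h4
    rw [ContinuousLinearMap.comp_id] at h5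
    exact h5
  exact (hasFDerivAt_integral_of_dominated_loc_of_lip (Metric.ball_mem_nhds y one_pos)
    (Eventually.of_forall fun x => hF_meas x) hF_int hF'_meas h_lip
    (integrable_const _) h_diff).2

/-- Rewriting the derivative of the smoothed function as a scaled set integral of `fderiv g`
over a ball around `y`. -/
lemma smoothed_deriv_eq {δ : ℝ} (hδ : 0 < δ) (g : EuclideanSpace ℝ (Fin d) → ℝ)
    (y : EuclideanSpace ℝ (Fin d)) :
    ∫ v, fderiv ℝ g (y + δ⁻¹ • v) ∂(uniformBallMeasure d)
      = ((volume (Metric.closedBall (0 : EuclideanSpace ℝ (Fin d)) 1)).toReal⁻¹ * δ ^ d) •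
        ∫ u in Metric.closedBall y δ⁻¹, fderiv ℝ g u := by
  have hδi : (0:ℝ) < δ⁻¹ := inv_pos.2 hδ
  set D := fderiv ℝ g with hD
  set f₀ : EuclideanSpace ℝ (Fin d) → (EuclideanSpace ℝ (Fin d) →L[ℝ] ℝ) :=
    (Metric.closedBall y δ⁻¹).indicator D with hf₀
  have key : ∀ v : EuclideanSpace ℝ (Fin d),
      (Metric.closedBall (0 : EuclideanSpace ℝ (Fin d)) 1).indicator
        (fun v => D (y + δ⁻¹ • v)) v = f₀ (y + δ⁻¹ • v) := by
    intro v
    have hdist : dist (y + δ⁻¹ • v) y = δ⁻¹ * ‖v‖ := by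
      rw [dist_eq_norm, add_sub_cancel_left, norm_smul, Real.norm_eq_abs, abs_of_pos hδi]
    by_cases hv : v ∈ Metric.closedBall (0 : EuclideanSpace ℝ (Fin d)) 1
    · have hv1 : ‖v‖ ≤ 1 := mem_closedBall_zero_iff.1 hv
      have hmem : y + δ⁻¹ • v ∈ Metric.closedBall y δ⁻¹ := by
        rw [Metric.mem_closedBall, hdist]
        calc δ⁻¹ * ‖v‖ ≤ δ⁻¹ * 1 := by nlinarith
          _ = δ⁻¹ := mul_one _
      rw [Set.indicator_of_mem hv, hf₀, Set.indicator_of_mem hmem]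
    · have hv1 : 1 < ‖v‖ := by
        by_contra h
        exact hv (mem_closedBall_zero_iff.2 (not_lt.1 h))
      have hmem : y + δ⁻¹ • v ∉ Metric.closedBall y δ⁻¹ := by
        rw [Metric.mem_closedBall, hdist]
        push_neg
        nlinarith
      rw [Set.indicator_of_notMem hv, hf₀, Set.indicator_of_notMem hmem]
  rw [uniformBallMeasure, integral_smul_measure, ENNReal.toReal_inv]
  rw [← integral_indicator measurableSet_closedBall]
  have hrw : ∫ v, (Metric.closedBall (0 : EuclideanSpace ℝ (Fin d)) 1).indicator
        (fun v => D (y + δ⁻¹ • v)) v ∂volume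
      = ∫ v, f₀ (y + δ⁻¹ • v) ∂volume := by
    congr 1
    funext v
    exact key v
  rw [hrw]
  have h1 : ∫ v : EuclideanSpace ℝ (Fin d), f₀ (y + δ⁻¹ • v) ∂volume
      = (δ ^ d) • ∫ u : EuclideanSpace ℝ (Fin d), f₀ (y + u) ∂volume := by
    have h2 := Measure.integral_comp_smul_of_nonneg (volume : Measure (EuclideanSpace ℝ (Fin d)))
      (fun u => f₀ (y + u)) δ⁻¹ (hR := hδi.le)
    simp only [finrank_euclideanSpace_fin] at h2
    rw [inv_pow, inv_inv] at h2
    exact h2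
  rw [h1]
  have h3 : ∫ u : EuclideanSpace ℝ (Fin d), f₀ (y + u) ∂volume
      = ∫ u : EuclideanSpace ℝ (Fin d), f₀ u ∂volume := integral_add_left_eq_self f₀ y
  rw [h3, hf₀, integral_indicator measurableSet_closedBall, smul_smul]

/-- Key estimate: difference of integrals of `fderiv g` over two balls of the same radius is
bounded via the volume of an annulus containing the symmetric difference. -/
lemma step_bound (hd : 1 ≤ d) {r : ℝ} (hr : 0 < r)
    (g : EuclideanSpace ℝ (Fin d) → ℝ) {C : ℝ≥0} (hL : LipschitzWith C g)
    (z₁ z₂ : EuclideanSpace ℝ (Fin d)) (hz : dist z₁ z₂ ≤ r) :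
    ‖(∫ u in Metric.closedBall z₁ r, fderiv ℝ g u) -
        ∫ u in Metric.closedBall z₂ r, fderiv ℝ g u‖
      ≤ (C : ℝ) * (((r + dist z₁ z₂ / 2) ^ d - (r - dist z₁ z₂ / 2) ^ d) *
          (volume (Metric.closedBall (0 : EuclideanSpace ℝ (Fin d)) 1)).toReal) := by
  haveI : Nontrivial (EuclideanSpace ℝ (Fin d)) :=
    Module.nontrivial_of_finrank_pos (R := ℝ) (by rw [finrank_euclideanSpace_fin]; omega)
  set D := fderiv ℝ g with hD
  have hDb : ∀ u, ‖D u‖ ≤ (C : ℝ) := fun u => norm_fderiv_le_of_lipschitz ℝ hL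
  have hDsm : StronglyMeasurable D := (measurable_fderiv ℝ g).stronglyMeasurable
  set A₁ := Metric.closedBall z₁ r with hA₁
  set A₂ := Metric.closedBall z₂ r with hA₂
  set m := midpoint ℝ z₁ z₂ with hm
  set h := dist z₁ z₂ with hh
  have hh0 : 0 ≤ h := dist_nonneg
  have hd1 : dist z₁ m = h / 2 := by
    rw [hm, dist_left_midpoint]
    rw [Real.norm_two, ← hh]
    ring
  have hd2 : dist z₂ m = h / 2 := by
    rw [hm, dist_right_midpoint]
    rw [Real.norm_two, hh, dist_comm z₁ z₂]
    ring
  -- integrability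
  have hint : ∀ s : Set (EuclideanSpace ℝ (Fin d)), volume s < ⊤ → IntegrableOn D s volume :=
    fun s hs => Integrable.mono' (integrableOn_const (C := (C : ℝ)) hs.ne)
      hDsm.aestronglyMeasurable.restrict (Filter.Eventually.of_forall hDb)
  have hA₁f : volume A₁ < ⊤ := measure_closedBall_lt_top
  have hA₂f : volume A₂ < ⊤ := measure_closedBall_lt_top
  have hA₁m : MeasurableSet A₁ := measurableSet_closedBall
  have hA₂m : MeasurableSet A₂ := measurableSet_closedBall
  -- decompose the two integrals
  have e₁ : ∫ u in A₁, D u = (∫ u in A₁ \ A₂, D u) + ∫ u in A₁ ∩ A₂, D u := by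
    rw [← setIntegral_union disjoint_sdiff_inter (hA₁m.inter hA₂m)
      (hint _ (lt_of_le_of_lt (measure_mono diff_subset) hA₁f))
      (hint _ (lt_of_le_of_lt (measure_mono inter_subset_left) hA₁f)),
      diff_union_inter]
  have e₂ : ∫ u in A₂, D u = (∫ u in A₂ \ A₁, D u) + ∫ u in A₁ ∩ A₂, D u := by
    rw [inter_comm, ← setIntegral_union disjoint_sdiff_inter (hA₂m.inter hA₁m)
      (hint _ (lt_of_le_of_lt (measure_mono diff_subset) hA₂f))
      (hint _ (lt_of_le_of_lt (measure_mono inter_subset_left) hA₂f)),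
      diff_union_inter]
  have e₃ : (∫ u in A₁, D u) - ∫ u in A₂, D u
      = (∫ u in A₁ \ A₂, D u) - ∫ u in A₂ \ A₁, D u := by
    rw [e₁, e₂]; abel
  -- norm bound by measures of the difference sets
  have n₁ : ‖∫ u in A₁ \ A₂, D u‖ ≤ (C : ℝ) * (volume (A₁ \ A₂)).toReal :=
    norm_setIntegral_le_of_norm_le_const
      (lt_of_le_of_lt (measure_mono diff_subset) hA₁f)
      (fun x _ => hDb x)
  have n₂ : ‖∫ u in A₂ \ A₁, D u‖ ≤ (C : ℝ) * (volume (A₂ \ A₁)).toReal :=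
    norm_setIntegral_le_of_norm_le_const
      (lt_of_le_of_lt (measure_mono diff_subset) hA₂f)
      (fun x _ => hDb x)
  -- the symmetric difference is contained in an annulus
  set Ann := Metric.closedBall m (r + h / 2) \ Metric.ball m (r - h / 2) with hAnn
  have sub1 : A₁ \ A₂ ⊆ Ann := by
    rintro u ⟨hu1, hu2⟩
    constructor
    · rw [Metric.mem_closedBall]
      calc dist u m ≤ dist u z₁ + dist z₁ m := dist_triangle u z₁ m
        _ ≤ r + h / 2 := by
            rw [hd1]
            linarith [Metric.mem_closedBall.1 hu1]
    · intro hu3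
      rw [Metric.mem_ball] at hu3
      have h4 : r < dist u z₂ := not_le.1 (fun hle => hu2 (Metric.mem_closedBall.2 hle))
      have h5 : dist u z₂ ≤ dist u m + dist z₂ m := dist_triangle_right u z₂ m
      rw [hd2] at h5
      linarith
  have sub2 : A₂ \ A₁ ⊆ Ann := by
    rintro u ⟨hu1, hu2⟩
    constructor
    · rw [Metric.mem_closedBall]
      calc dist u m ≤ dist u z₂ + dist z₂ m := dist_triangle u z₂ m
        _ ≤ r + h / 2 := by
            rw [hd2]
            linarith [Metric.mem_closedBall.1 hu1]
    · intro hu3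
      rw [Metric.mem_ball] at hu3
      have h4 : r < dist u z₁ := not_le.1 (fun hle => hu2 (Metric.mem_closedBall.2 hle))
      have h5 : dist u z₁ ≤ dist u m + dist z₁ m := dist_triangle_right u z₁ m
      rw [hd1] at h5
      linarith
  -- volume of the annulus
  have hrh1 : (0:ℝ) ≤ r + h / 2 := by linarith
  have hrh2 : (0:ℝ) ≤ r - h / 2 := by linarith
  have hAnnVol : (volume Ann).toReal
      = ((r + h / 2) ^ d - (r - h / 2) ^ d) *
        (volume (Metric.closedBall (0 : EuclideanSpace ℝ (Fin d)) 1)).toReal := by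
    have hsub : Metric.ball m (r - h / 2) ⊆ Metric.closedBall m (r + h / 2) :=
      Metric.ball_subset_closedBall.trans (Metric.closedBall_subset_closedBall (by linarith))
    rw [hAnn, measure_diff hsub measurableSet_ball.nullMeasurableSet measure_ball_lt_top.ne]
    have hb1 : volume (Metric.closedBall m (r + h / 2))
        = ENNReal.ofReal ((r + h / 2) ^ d) *
          volume (Metric.closedBall (0 : EuclideanSpace ℝ (Fin d)) 1) := by
      rw [Measure.addHaar_closedBall' volume m hrh1, finrank_euclideanSpace_fin]
    have hb2 : volume (Metric.ball m (r - h / 2))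
        = ENNReal.ofReal ((r - h / 2) ^ d) *
          volume (Metric.closedBall (0 : EuclideanSpace ℝ (Fin d)) 1) := by
      rw [← Measure.addHaar_closedBall_eq_addHaar_ball,
        Measure.addHaar_closedBall' volume m hrh2, finrank_euclideanSpace_fin]
    rw [hb1, hb2]
    have hle : ENNReal.ofReal ((r - h / 2) ^ d) *
          volume (Metric.closedBall (0 : EuclideanSpace ℝ (Fin d)) 1)
        ≤ ENNReal.ofReal ((r + h / 2) ^ d) *
          volume (Metric.closedBall (0 : EuclideanSpace ℝ (Fin d)) 1) :=
      mul_le_mul_of_nonneg_right (ENNReal.ofReal_le_ofReal (pow_le_pow_left₀ hrh2 (by linarith) d)) (by positivity)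
    rw [ENNReal.toReal_sub_of_le hle
      (ENNReal.mul_ne_top ENNReal.ofReal_ne_top (kappa_ne_top d))]
    rw [ENNReal.toReal_mul, ENNReal.toReal_mul, ENNReal.toReal_ofReal (pow_nonneg hrh1 d),
      ENNReal.toReal_ofReal (pow_nonneg hrh2 d)]
    ring
  -- put everything together
  rw [e₃]
  calc ‖(∫ u in A₁ \ A₂, D u) - ∫ u in A₂ \ A₁, D u‖
      ≤ ‖∫ u in A₁ \ A₂, D u‖ + ‖∫ u in A₂ \ A₁, D u‖ := norm_sub_le _ _
    _ ≤ (C : ℝ) * (volume (A₁ \ A₂)).toReal + (C : ℝ) * (volume (A₂ \ A₁)).toReal :=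
        add_le_add n₁ n₂
    _ = (C : ℝ) * ((volume (A₁ \ A₂)).toReal + (volume (A₂ \ A₁)).toReal) := by ring
    _ ≤ (C : ℝ) * (volume Ann).toReal := by
        refine mul_le_mul_of_nonneg_left ?_ C.coe_nonneg
        have hfin1 : volume (A₁ \ A₂) ≠ ⊤ :=
          (lt_of_le_of_lt (measure_mono diff_subset) hA₁f).ne
        have hfin2 : volume (A₂ \ A₁) ≠ ⊤ :=
          (lt_of_le_of_lt (measure_mono diff_subset) hA₂f).ne
        rw [← ENNReal.toReal_add hfin1 hfin2]
        refine ENNReal.toReal_mono ?_ ?_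
        · exact (lt_of_le_of_lt (measure_mono diff_subset)
            (measure_closedBall_lt_top (x := m) (r := r + h / 2))).ne
        · rw [← measure_union (disjoint_sdiff_sdiff) (hA₂m.diff hA₁m)]
          exact measure_mono (union_subset sub1 sub2)
    _ = (C : ℝ) * (((r + h / 2) ^ d - (r - h / 2) ^ d) *
          (volume (Metric.closedBall (0 : EuclideanSpace ℝ (Fin d)) 1)).toReal) := by
        rw [hAnnVol]

lemma tendsto_annulus_bound {r s : ℝ} (hr : 0 < r) (hs : 0 < s) (d : ℕ) :
    Tendsto (fun n : ℕ => (n : ℝ) * ((r + s / n / 2) ^ d - (r - s / n / 2) ^ d))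
      atTop (𝓝 (s * ((d : ℝ) * r ^ (d - 1)))) := by
  set ψ : ℝ → ℝ := fun h => (r + h / 2) ^ d - (r - h / 2) ^ d with hψ
  have hψ0 : ψ 0 = 0 := by simp [hψ]
  have hder : HasDerivAt ψ ((d : ℝ) * r ^ (d - 1)) 0 := by
    have h1 : HasDerivAt (fun h : ℝ => r + h / 2) (1 / 2) 0 := by
      simpa using ((hasDerivAt_id (0:ℝ)).div_const 2).const_add r
    have h2 : HasDerivAt (fun h : ℝ => r - h / 2) (-(1 / 2)) 0 := by
      simpa using ((hasDerivAt_id (0:ℝ)).div_const 2).const_sub r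
    have h3 := (h1.pow d).sub (h2.pow d)
    rw [show (d:ℝ) * (r + 0 / 2) ^ (d - 1) * (1 / 2) - (d:ℝ) * (r - 0 / 2) ^ (d - 1) * -(1 / 2)
        = (d:ℝ) * r ^ (d - 1) by simp only [zero_div, add_zero, sub_zero]; ring] at h3
    exact h3
  have hslope := hasDerivAt_iff_tendsto_slope.1 hder
  have hseq : Tendsto (fun n : ℕ => s / n) atTop (𝓝[≠] (0:ℝ)) := by
    refine tendsto_nhdsWithin_iff.2 ⟨tendsto_const_div_atTop_nhds_zero_nat s, ?_⟩
    filter_upwards [eventually_ge_atTop 1] with n hn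
    have hpos : (0:ℝ) < s / n := div_pos hs (by exact_mod_cast hn)
    exact Set.mem_compl_singleton_iff.2 hpos.ne'
  have h4 := hslope.comp hseq
  have h5 := h4.const_mul s
  refine h5.congr' ?_
  filter_upwards [eventually_ge_atTop 1] with n hn
  have hn0 : (0:ℝ) < n := by exact_mod_cast hn
  have hx : (0:ℝ) < s / n := div_pos hs hn0
  show s * slope ψ 0 (s / n) = (n : ℝ) * ψ (s / n)
  rw [slope_def_field, hψ0]
  rw [sub_zero, sub_zero]
  field_simp

lemma grad_bound (hd : 1 ≤ d) {δ : ℝ} (hδ : 0 < δ)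
    (g : EuclideanSpace ℝ (Fin d) → ℝ) {C : ℝ≥0} (hL : LipschitzWith C g)
    (y₁ y₂ : EuclideanSpace ℝ (Fin d)) :
    ‖(∫ v, fderiv ℝ g (y₁ + δ⁻¹ • v) ∂(uniformBallMeasure d)) -
        ∫ v, fderiv ℝ g (y₂ + δ⁻¹ • v) ∂(uniformBallMeasure d)‖
      ≤ δ * d * (C : ℝ) * ‖y₁ - y₂‖ := by
  have hr : (0:ℝ) < δ⁻¹ := inv_pos.2 hδ
  set Φ : EuclideanSpace ℝ (Fin d) → (EuclideanSpace ℝ (Fin d) →L[ℝ] ℝ) :=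
    fun y => ∫ v, fderiv ℝ g (y + δ⁻¹ • v) ∂(uniformBallMeasure d) with hΦ
  set T : EuclideanSpace ℝ (Fin d) → (EuclideanSpace ℝ (Fin d) →L[ℝ] ℝ) :=
    fun y => ∫ u in Metric.closedBall y δ⁻¹, fderiv ℝ g u with hT
  set κr := (volume (Metric.closedBall (0 : EuclideanSpace ℝ (Fin d)) 1)).toReal with hκr
  have hκr0 : 0 < κr := ENNReal.toReal_pos (kappa_ne_zero d) (kappa_ne_top d)
  have hΦT : ∀ y, Φ y = (κr⁻¹ * δ ^ d) • T y := fun y => smoothed_deriv_eq hδ g y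
  set s := ‖y₁ - y₂‖ with hs
  rcases eq_or_lt_of_le (norm_nonneg (y₁ - y₂)) with hs0 | hs0
  · have hy : y₁ = y₂ := sub_eq_zero.1 (norm_eq_zero.1 hs0.symm)
    rw [hy, sub_self, norm_zero, hs, ← hs0, mul_zero]
  · set r := δ⁻¹ with hrr
    have key : ∀ n : ℕ, 1 ≤ n → s / n ≤ r →
        ‖Φ y₁ - Φ y₂‖ ≤ (δ ^ d * (C:ℝ)) *
          ((n:ℝ) * ((r + s / n / 2) ^ d - (r - s / n / 2) ^ d)) := by
      intro n hn1 hn2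
      have hn0 : (0:ℝ) < n := by exact_mod_cast hn1
      set z : ℕ → EuclideanSpace ℝ (Fin d) := fun i => y₂ + ((i:ℝ)/n) • (y₁ - y₂) with hz
      have hz0 : z 0 = y₂ := by simp [hz]
      have hzn : z n = y₁ := by
        rw [hz]
        simp only [div_self hn0.ne', one_smul]
        abel
      have hdz : ∀ i : ℕ, dist (z (i+1)) (z i) = s / n := by
        intro i
        rw [dist_eq_norm]
        have hzz : z (i+1) - z i = ((1:ℝ)/n) • (y₁ - y₂) := by
          rw [hz]
          simp only
          rw [add_sub_add_left_eq_sub, ← sub_smul]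
          congr 1
          push_cast
          ring
        rw [hzz]
        calc ‖((1:ℝ)/n) • (y₁ - y₂)‖ = |(1:ℝ)/n| * s := by rw [norm_smul, Real.norm_eq_abs, hs]
          _ = s / n := by rw [abs_of_pos (by positivity)]; ring
      have step : ∀ i : ℕ, ‖Φ (z (i+1)) - Φ (z i)‖
          ≤ (δ ^ d * (C:ℝ)) * ((r + s / n / 2) ^ d - (r - s / n / 2) ^ d) := by
        intro i
        have hsm : Φ (z (i+1)) - Φ (z i) = (κr⁻¹ * δ ^ d) • (T (z (i+1)) - T (z i)) := by
          rw [hΦT, hΦT, smul_sub]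
        rw [hsm, norm_smul, Real.norm_eq_abs,
          abs_of_pos (by positivity : (0:ℝ) < κr⁻¹ * δ ^ d)]
        have hb := step_bound hd hr g hL (z (i+1)) (z i) (by rw [hdz i]; exact hn2)
        rw [hdz i] at hb
        calc (κr⁻¹ * δ ^ d) * ‖T (z (i+1)) - T (z i)‖
            ≤ (κr⁻¹ * δ ^ d) * ((C:ℝ) * (((r + s / n / 2) ^ d - (r - s / n / 2) ^ d) * κr)) :=
              mul_le_mul_of_nonneg_left hb (by positivity)
          _ = (δ ^ d * (C:ℝ)) * ((r + s / n / 2) ^ d - (r - s / n / 2) ^ d) := by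
              field_simp
      have htel : Φ y₁ - Φ y₂ = ∑ i ∈ Finset.range n, (Φ (z (i+1)) - Φ (z i)) := by
        rw [Finset.sum_range_sub (fun i => Φ (z i)), hz0, hzn]
      rw [htel]
      calc ‖∑ i ∈ Finset.range n, (Φ (z (i+1)) - Φ (z i))‖
          ≤ ∑ i ∈ Finset.range n, ‖Φ (z (i+1)) - Φ (z i)‖ := norm_sum_le _ _
        _ ≤ ∑ _i ∈ Finset.range n,
              (δ ^ d * (C:ℝ)) * ((r + s / n / 2) ^ d - (r - s / n / 2) ^ d) :=
            Finset.sum_le_sum fun i _ => step i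
        _ = (δ ^ d * (C:ℝ)) * ((n:ℝ) * ((r + s / n / 2) ^ d - (r - s / n / 2) ^ d)) := by
            rw [Finset.sum_const, Finset.card_range, nsmul_eq_mul]
            ring
    have hlim := (tendsto_annulus_bound hr hs0 d).const_mul (δ ^ d * (C:ℝ))
    have hev : ∀ᶠ n : ℕ in atTop, ‖Φ y₁ - Φ y₂‖ ≤ (δ ^ d * (C:ℝ)) *
        ((n:ℝ) * ((r + s / n / 2) ^ d - (r - s / n / 2) ^ d)) := by
      have h1 : ∀ᶠ n : ℕ in atTop, s / (n:ℝ) < r :=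
        (tendsto_const_div_atTop_nhds_zero_nat s).eventually (gt_mem_nhds hr)
      filter_upwards [eventually_ge_atTop 1, h1] with n hn1 hn2
      exact key n hn1 hn2.le
    have hfin := ge_of_tendsto hlim hev
    refine hfin.trans (le_of_eq ?_)
    have hpow : δ ^ d * (δ⁻¹) ^ (d - 1) = δ := by
      have h1 : d - (d - 1) = 1 := by omega
      rw [inv_pow, ← pow_sub₀ δ (ne_of_gt hδ) (Nat.sub_le d 1), h1, pow_one]
    calc (δ ^ d * (C:ℝ)) * (s * ((d : ℝ) * r ^ (d - 1)))
        = (δ ^ d * (δ⁻¹) ^ (d - 1)) * (d : ℝ) * (C:ℝ) * s := by rw [hrr]; ring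
      _ = δ * d * (C : ℝ) * s := by rw [hpow]

end SmoothingLemmaAux

/-- If `g : ℝ^d → ℝ` is `L`-Lipschitz and `δ > 0`, then the ball-smoothed
function `ĝ(y) = E_{v ~ μ_B}[g(y + v/δ)]` is differentiable and `(δ d L)`-smooth, i.e. its
gradient is `(δ d L)`-Lipschitz. -/
theorem smoothing_lemma (d : ℕ) (L δ : ℝ) (hδ : 0 < δ)
    (g : EuclideanSpace ℝ (Fin d) → ℝ)
    (hg : ∀ a b : EuclideanSpace ℝ (Fin d), |g a - g b| ≤ L * ‖a - b‖) :
    (∀ y : EuclideanSpace ℝ (Fin d),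
        DifferentiableAt ℝ (fun y' => ∫ v, g (y' + δ⁻¹ • v) ∂(uniformBallMeasure d)) y) ∧
      (∀ y₁ y₂ : EuclideanSpace ℝ (Fin d),
        ‖gradient (fun y' => ∫ v, g (y' + δ⁻¹ • v) ∂(uniformBallMeasure d)) y₁ -
            gradient (fun y' => ∫ v, g (y' + δ⁻¹ • v) ∂(uniformBallMeasure d)) y₂‖ ≤
          δ * d * L * ‖y₁ - y₂‖) := by
  rcases Nat.eq_zero_or_pos d with hd0 | hd
  · subst hd0
    haveI : Subsingleton (EuclideanSpace ℝ (Fin 0)) :=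
      ⟨fun a b => by ext i; exact i.elim0⟩
    have hconst : (fun y' : EuclideanSpace ℝ (Fin 0) =>
        ∫ v, g (y' + δ⁻¹ • v) ∂(uniformBallMeasure 0))
        = fun _ => ∫ v, g (0 + δ⁻¹ • v) ∂(uniformBallMeasure 0) :=
      funext fun x => by rw [Subsingleton.elim x 0]
    constructor
    · intro y
      rw [hconst]
      exact differentiableAt_const _
    · intro y₁ y₂
      rw [Subsingleton.elim y₁ y₂]
      simp
  · have hL0 : 0 ≤ L := by
      have h1 := hg (EuclideanSpace.single (⟨0, hd⟩ : Fin d) (1:ℝ)) 0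
      rw [sub_zero, EuclideanSpace.norm_single, norm_one, mul_one] at h1
      exact le_trans (abs_nonneg _) h1
    set C := Real.toNNReal L with hCdef
    have hC : (C:ℝ) = L := Real.coe_toNNReal L hL0
    have hL : LipschitzWith C g := by
      refine LipschitzWith.of_dist_le_mul fun a b => ?_
      rw [Real.dist_eq, dist_eq_norm, hC]
      exact hg a b
    constructor
    · intro y
      exact (SmoothingLemmaAux.smoothed_hasFDerivAt hδ g hL y).differentiableAt
    · intro y₁ y₂
      have h1 := (SmoothingLemmaAux.smoothed_hasFDerivAt hδ g hL y₁).fderiv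
      have h2 := (SmoothingLemmaAux.smoothed_hasFDerivAt hδ g hL y₂).fderiv
      unfold gradient
      rw [← LinearIsometryEquiv.map_sub, LinearIsometryEquiv.norm_map, h1, h2]
      have hfin := SmoothingLemmaAux.grad_bound hd hδ g hL y₁ y₂
      rw [hC] at hfin
      exact hfin
end

section
/- Let K ⊆ ℝ^d be a nonempty convex compact set with ‖x‖ ≤ D for all x ∈ K, let δ > 0, and let h_δ^*(y) = E_{v ~ μ_B}[M_K(y + v/δ)] be the ball-smoothed support function. Then for every x ∈ K, the Fenchel conjugate value satisfies sup_{y ∈ ℝ^d} (⟨x, y⟩ − h_δ^*(y)) ≤ D/δ. -/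
open Set Metric MeasureTheory
open scoped RealInnerProductSpace

/-- The support function `M_K(y) = sup_{x ∈ K} ⟨y, x⟩` of a set `K ⊆ ℝ^d`. -/
noncomputable def supportFn {d : ℕ} (K : Set (EuclideanSpace ℝ (Fin d)))
    (y : EuclideanSpace ℝ (Fin d)) : ℝ :=
  sSup ((fun x => ⟪y, x⟫) '' K)

/-- The ball-smoothed support function `h_δ^*(y) = E_{v ~ μ_B}[M_K(y + v/δ)]`. -/
noncomputable def smoothedSupportFn {d : ℕ} (K : Set (EuclideanSpace ℝ (Fin d))) (δ : ℝ)
    (y : EuclideanSpace ℝ (Fin d)) : ℝ :=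
  ∫ v, supportFn K (y + δ⁻¹ • v) ∂(uniformBallMeasure d)

/-- For a nonempty convex compact `K ⊆ ℝ^d` with `‖x‖ ≤ D` on `K` and `δ > 0`,
the Fenchel conjugate of the ball-smoothed support function satisfies, for every `x ∈ K`,
`sup_{y} (⟨x, y⟩ − h_δ^*(y)) ≤ D/δ`, i.e. `⟨x, y⟩ − h_δ^*(y) ≤ D/δ` for every `y ∈ ℝ^d`. -/
theorem smoothed_support_fenchel_bound (d : ℕ) (K : Set (EuclideanSpace ℝ (Fin d)))
    (hKne : K.Nonempty) (hKconv : Convex ℝ K) (hKcomp : IsCompact K)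
    (D δ : ℝ) (hD : ∀ x ∈ K, ‖x‖ ≤ D) (hδ : 0 < δ) :
    ∀ x ∈ K, ∀ y : EuclideanSpace ℝ (Fin d),
      ⟪x, y⟫ - smoothedSupportFn K δ y ≤ D / δ := by
  intro x hx y
  obtain ⟨x₀, hx₀⟩ := hKne
  have hD0 : 0 ≤ D := le_trans (norm_nonneg x₀) (hD x₀ hx₀)
  have hbdd : ∀ z : EuclideanSpace ℝ (Fin d), BddAbove ((fun x => ⟪z, x⟫) '' K) := fun z =>
    hKcomp.bddAbove_image ((continuous_const.inner continuous_id).continuousOn)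
  have hne : ∀ z : EuclideanSpace ℝ (Fin d), ((fun x => ⟪z, x⟫) '' K).Nonempty :=
    fun z => (Set.nonempty_of_mem hx₀).image _
  have hle : ∀ z : EuclideanSpace ℝ (Fin d), ∀ w ∈ K, ⟪z, w⟫ ≤ supportFn K z := by
    intro z w hw
    exact le_csSup (hbdd z) ⟨w, hw, rfl⟩
  -- Lipschitz bound for supportFn
  have hlip : ∀ a b : EuclideanSpace ℝ (Fin d),
      supportFn K a ≤ supportFn K b + D * ‖a - b‖ := by
    intro a b
    apply csSup_le (hne a)
    rintro r ⟨w, hw, rfl⟩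
    have h1 : ⟪a - b, w⟫ = ⟪a, w⟫ - ⟪b, w⟫ := inner_sub_left a b w
    have h2 : ⟪a - b, w⟫ ≤ ‖a - b‖ * ‖w‖ := real_inner_le_norm _ _
    have h3 : ‖a - b‖ * ‖w‖ ≤ ‖a - b‖ * D :=
      mul_le_mul_of_nonneg_left (hD w hw) (norm_nonneg _)
    have h4 : ⟪b, w⟫ ≤ supportFn K b := hle b w hw
    nlinarith [norm_nonneg (a - b)]
  have hcont : Continuous (supportFn K) := by
    have : LipschitzWith (Real.toNNReal D) (supportFn K) := by
      apply LipschitzWith.of_dist_le_mul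
      intro a b
      rw [Real.dist_eq, dist_eq_norm, Real.coe_toNNReal D hD0, abs_sub_le_iff]
      constructor
      · have := hlip a b; linarith
      · have := hlip b a
        rw [show ‖b - a‖ = ‖a - b‖ from norm_sub_rev b a] at this
        linarith
    exact this.continuous
  -- measure facts
  have hvolpos : 0 < volume (closedBall (0 : EuclideanSpace ℝ (Fin d)) 1) :=
    lt_of_lt_of_le (measure_ball_pos _ _ one_pos) (measure_mono ball_subset_closedBall)
  have hvolfin : volume (closedBall (0 : EuclideanSpace ℝ (Fin d)) 1) ≠ ⊤ :=
    (isCompact_closedBall _ _).measure_lt_top.ne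
  have hprob : IsProbabilityMeasure (uniformBallMeasure d) := by
    constructor
    simp only [uniformBallMeasure, Measure.smul_apply, Measure.restrict_apply_univ,
      smul_eq_mul]
    exact ENNReal.inv_mul_cancel hvolpos.ne' hvolfin
  set g : EuclideanSpace ℝ (Fin d) → ℝ := fun v => supportFn K (y + δ⁻¹ • v) with hg
  have hgcont : Continuous g :=
    hcont.comp (continuous_const.add (continuous_id.const_smul δ⁻¹))
  have hint : Integrable g (uniformBallMeasure d) := by
    rw [uniformBallMeasure]
    exact (hgcont.continuousOn.integrableOn_compact (isCompact_closedBall _ _)).smul_measure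
      (ENNReal.inv_ne_top.mpr hvolpos.ne')
  -- pointwise bound a.e.
  have hae : ∀ᵐ v ∂(uniformBallMeasure d), ⟪x, y⟫ - D / δ ≤ g v := by
    have hball : ∀ᵐ v ∂(uniformBallMeasure d), v ∈ closedBall (0 : EuclideanSpace ℝ (Fin d)) 1 := by
      rw [uniformBallMeasure]
      exact (Measure.ae_smul_measure (ae_restrict_mem measurableSet_closedBall) _)
    filter_upwards [hball] with v hv
    have hvnorm : ‖v‖ ≤ 1 := by
      simpa [mem_closedBall, dist_eq_norm] using hv
    have h1 : ⟪y + δ⁻¹ • v, x⟫ ≤ g v := hle _ x hx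
    have h2 : ⟪y + δ⁻¹ • v, x⟫ = ⟪y, x⟫ + δ⁻¹ * ⟪v, x⟫ := by
      rw [inner_add_left, real_inner_smul_left]
    have h3 : |⟪v, x⟫| ≤ D := by
      calc |⟪v, x⟫| ≤ ‖v‖ * ‖x‖ := abs_real_inner_le_norm v x
        _ ≤ 1 * D := mul_le_mul hvnorm (hD x hx) (norm_nonneg x) zero_le_one
        _ = D := one_mul D
    have h4 : -(D) ≤ ⟪v, x⟫ := neg_le_of_abs_le h3
    have h5 : δ⁻¹ * (-(D)) ≤ δ⁻¹ * ⟪v, x⟫ :=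
      mul_le_mul_of_nonneg_left h4 (inv_nonneg.mpr hδ.le)
    have h6 : ⟪x, y⟫ = ⟪y, x⟫ := real_inner_comm y x
    have h7 : δ⁻¹ * (-(D)) = -(D / δ) := by field_simp
    linarith
  have hconst : Integrable (fun _ : EuclideanSpace ℝ (Fin d) => ⟪x, y⟫ - D / δ)
      (uniformBallMeasure d) := integrable_const _
  have hmono := integral_mono_ae hconst hint hae
  rw [integral_const] at hmono
  simp only [probReal_univ, one_smul] at hmono
  have : smoothedSupportFn K δ y = ∫ v, g v ∂(uniformBallMeasure d) := rfl
  linarith [this ▸ hmono]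
end

section
/- (Regret of expected Follow-the-Perturbed-Leader.) Let K ⊆ ℝ^d be a nonempty convex compact set with ‖x‖ ≤ D for all x ∈ K, let δ > 0, let f₁, …, f_T : ℝ^d → ℝ be convex differentiable functions with ‖∇f_t(x)‖ ≤ G for all x ∈ K and all t, and let h_δ^*(y) = E_{v ~ μ_B}[M_K(y + v/δ)]. Suppose the points x₁, …, x_T ∈ K satisfy x_t = ∇h_δ^*(− Σ_{s=1}^{t−1} ∇f_s(x_s)) for each t (the expected FPL iterates). Then Σ_{t=1}^T f_t(x_t) − min_{x ∈ K} Σ_{t=1}^T f_t(x) ≤ 2D/δ + (δ d D/2) G² T. -/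
open Set Metric MeasureTheory
open scoped RealInnerProductSpace

open scoped ENNReal NNReal Topology

section A
variable {d : ℕ} {K : Set (EuclideanSpace ℝ (Fin d))} {D : ℝ}

lemma fpl_D_nonneg (hKne : K.Nonempty) (hD : ∀ x ∈ K, ‖x‖ ≤ D) : 0 ≤ D := by
  obtain ⟨x, hx⟩ := hKne
  exact (norm_nonneg x).trans (hD x hx)

lemma fpl_bddAbove (hD : ∀ x ∈ K, ‖x‖ ≤ D) (y : EuclideanSpace ℝ (Fin d)) :
    BddAbove ((fun x => ⟪y, x⟫) '' K) := by
  refine ⟨‖y‖ * D, ?_⟩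
  rintro _ ⟨x, hx, rfl⟩
  calc ⟪y, x⟫ ≤ ‖y‖ * ‖x‖ := real_inner_le_norm y x
    _ ≤ ‖y‖ * D := mul_le_mul_of_nonneg_left (hD x hx) (norm_nonneg y)

lemma fpl_inner_le_supportFn (hD : ∀ x ∈ K, ‖x‖ ≤ D) {x : EuclideanSpace ℝ (Fin d)} (hx : x ∈ K)
    (y : EuclideanSpace ℝ (Fin d)) : ⟪y, x⟫ ≤ supportFn K y :=
  le_csSup (fpl_bddAbove hD y) ⟨x, hx, rfl⟩

lemma fpl_supportFn_le (hKne : K.Nonempty) (hD : ∀ x ∈ K, ‖x‖ ≤ D) (y : EuclideanSpace ℝ (Fin d)) :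
    supportFn K y ≤ ‖y‖ * D := by
  apply csSup_le (hKne.image _)
  rintro _ ⟨x, hx, rfl⟩
  calc ⟪y, x⟫ ≤ ‖y‖ * ‖x‖ := real_inner_le_norm y x
    _ ≤ ‖y‖ * D := mul_le_mul_of_nonneg_left (hD x hx) (norm_nonneg y)

lemma fpl_supportFn_sub_le (hKne : K.Nonempty) (hD : ∀ x ∈ K, ‖x‖ ≤ D)
    (y₁ y₂ : EuclideanSpace ℝ (Fin d)) :
    supportFn K y₁ - supportFn K y₂ ≤ D * ‖y₁ - y₂‖ := by
  rw [sub_le_iff_le_add, add_comm]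
  apply csSup_le (hKne.image _)
  rintro _ ⟨x, hx, rfl⟩
  have h1 : ⟪y₁, x⟫ = ⟪y₂, x⟫ + ⟪y₁ - y₂, x⟫ := by
    rw [inner_sub_left]; ring
  have h2 : ⟪y₁ - y₂, x⟫ ≤ D * ‖y₁ - y₂‖ := by
    calc ⟪y₁ - y₂, x⟫ ≤ ‖y₁ - y₂‖ * ‖x‖ := real_inner_le_norm _ _
      _ ≤ ‖y₁ - y₂‖ * D := mul_le_mul_of_nonneg_left (hD x hx) (norm_nonneg _)
      _ = D * ‖y₁ - y₂‖ := mul_comm _ _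
  calc ⟪y₁, x⟫ = ⟪y₂, x⟫ + ⟪y₁ - y₂, x⟫ := h1
    _ ≤ supportFn K y₂ + D * ‖y₁ - y₂‖ :=
      add_le_add (fpl_inner_le_supportFn hD hx y₂) h2

lemma fpl_supportFn_lipschitz (hKne : K.Nonempty) (hD : ∀ x ∈ K, ‖x‖ ≤ D) :
    LipschitzWith (Real.toNNReal D) (supportFn K) := by
  apply LipschitzWith.of_dist_le_mul
  intro y₁ y₂
  rw [Real.dist_eq, Real.coe_toNNReal D (fpl_D_nonneg hKne hD), abs_sub_le_iff]
  constructor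
  · simpa [dist_eq_norm] using fpl_supportFn_sub_le hKne hD y₁ y₂
  · simpa [dist_eq_norm, norm_sub_rev y₁ y₂] using fpl_supportFn_sub_le hKne hD y₂ y₁

lemma fpl_supportFn_zero (hKne : K.Nonempty) : supportFn K (0 : EuclideanSpace ℝ (Fin d)) = 0 := by
  have h : (fun x : EuclideanSpace ℝ (Fin d) => ⟪(0:EuclideanSpace ℝ (Fin d)), x⟫) '' K = {(0:ℝ)} := by
    have h2 : (fun x : EuclideanSpace ℝ (Fin d) => ⟪(0:EuclideanSpace ℝ (Fin d)), x⟫) = fun _ => (0:ℝ) := by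
      ext x; simp
    rw [h2]
    exact Set.Nonempty.image_const hKne 0
  rw [supportFn, h, csSup_singleton]

end A
section B
variable {d : ℕ}

lemma fpl_volB_pos : 0 < volume (Metric.closedBall (0 : EuclideanSpace ℝ (Fin d)) 1) :=
  measure_closedBall_pos volume 0 one_pos

lemma fpl_volB_ne_top : volume (Metric.closedBall (0 : EuclideanSpace ℝ (Fin d)) 1) ≠ ∞ :=
  measure_closedBall_lt_top.ne

instance : IsProbabilityMeasure (uniformBallMeasure d) := by
  constructor
  rw [uniformBallMeasure, Measure.smul_apply, Measure.restrict_apply MeasurableSet.univ,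
    Set.univ_inter, smul_eq_mul]
  exact ENNReal.inv_mul_cancel fpl_volB_pos.ne' fpl_volB_ne_top

-- integrability of bounded a.e.-strongly-measurable functions
lemma fpl_integrable_of_bound {F : Type*} [NormedAddCommGroup F]
    (g : EuclideanSpace ℝ (Fin d) → F) (C : ℝ)
    (hm : AEStronglyMeasurable g (uniformBallMeasure d))
    (hb : ∀ v, ‖g v‖ ≤ C) : Integrable g (uniformBallMeasure d) := by
  exact (integrable_const C).mono' hm (Filter.Eventually.of_forall hb)

lemma fpl_aesm_uniform {F : Type*} [NormedAddCommGroup F] [SecondCountableTopology F]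
    [MeasurableSpace F] [BorelSpace F]
    (g : EuclideanSpace ℝ (Fin d) → F) (hg : Measurable g) :
    AEStronglyMeasurable g (uniformBallMeasure d) :=
  hg.aestronglyMeasurable

-- volume measure vs uniformBallMeasure: absolute continuity
lemma fpl_uniform_ac : uniformBallMeasure d ≪ (volume : Measure (EuclideanSpace ℝ (Fin d))) := by
  refine Measure.AbsolutelyContinuous.mk fun s hs h0 => ?_
  rw [uniformBallMeasure, Measure.smul_apply, Measure.restrict_apply hs, smul_eq_mul]
  have : volume (s ∩ Metric.closedBall (0 : EuclideanSpace ℝ (Fin d)) 1) = 0 :=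
    le_antisymm (h0 ▸ measure_mono Set.inter_subset_left) zero_le
  simp [this]

-- a.e. membership in the ball
lemma fpl_ae_mem_ball :
    ∀ᵐ v ∂(uniformBallMeasure d), v ∈ Metric.closedBall (0 : EuclideanSpace ℝ (Fin d)) 1 := by
  rw [uniformBallMeasure]
  exact Measure.ae_smul_measure (ae_restrict_mem measurableSet_closedBall) _
end B
section D
variable {d : ℕ} {K : Set (EuclideanSpace ℝ (Fin d))} {D δ : ℝ}

lemma fpl_qmp (hδ : 0 < δ) (y : EuclideanSpace ℝ (Fin d)) :
    Measure.QuasiMeasurePreserving (fun v : EuclideanSpace ℝ (Fin d) => y + δ⁻¹ • v)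
      volume volume := by
  have h1 : Measure.QuasiMeasurePreserving (fun v : EuclideanSpace ℝ (Fin d) => δ⁻¹ • v)
      volume volume := Measure.quasiMeasurePreserving_smul volume (inv_ne_zero hδ.ne')
  have h2 : Measure.QuasiMeasurePreserving (fun v : EuclideanSpace ℝ (Fin d) => y + v)
      volume volume := (measurePreserving_add_left volume y).quasiMeasurePreserving
  exact h2.comp h1

lemma fpl_abs_supportFn_le (hKne : K.Nonempty) (hD : ∀ x ∈ K, ‖x‖ ≤ D)
    (y : EuclideanSpace ℝ (Fin d)) : |supportFn K y| ≤ ‖y‖ * D := by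
  rw [abs_le]
  refine ⟨?_, fpl_supportFn_le hKne hD y⟩
  obtain ⟨x0, hx0⟩ := hKne
  have := fpl_inner_le_supportFn hD hx0 y
  have h2 : -(‖y‖ * D) ≤ ⟪y, x0⟫ := by
    have := abs_real_inner_le_norm y x0
    have h3 : ‖y‖ * ‖x0‖ ≤ ‖y‖ * D := mul_le_mul_of_nonneg_left (hD x0 hx0) (norm_nonneg y)
    nlinarith [abs_nonneg ⟪y, x0⟫, neg_abs_le ⟪y, x0⟫]
  linarith

lemma fpl_integrable_supp (hKne : K.Nonempty) (hD : ∀ x ∈ K, ‖x‖ ≤ D) (hδ : 0 < δ)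
    (y : EuclideanSpace ℝ (Fin d)) :
    Integrable (fun v => supportFn K (y + δ⁻¹ • v)) (uniformBallMeasure d) := by
  have hcont : Continuous (supportFn K) := (fpl_supportFn_lipschitz hKne hD).continuous
  refine (integrable_const ((‖y‖ + δ⁻¹) * D)).mono'
    ((hcont.comp (continuous_const.add (continuous_const_smul _))).aestronglyMeasurable) ?_
  filter_upwards [fpl_ae_mem_ball] with v hv
  have h1 : ‖y + δ⁻¹ • v‖ ≤ ‖y‖ + δ⁻¹ := by
    calc ‖y + δ⁻¹ • v‖ ≤ ‖y‖ + ‖δ⁻¹ • v‖ := norm_add_le _ _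
      _ ≤ ‖y‖ + δ⁻¹ := by
          rw [norm_smul, Real.norm_eq_abs, abs_of_pos (inv_pos.2 hδ)]
          have : ‖v‖ ≤ 1 := mem_closedBall_zero_iff.1 hv
          nlinarith [inv_pos.2 hδ]
  calc ‖supportFn K (y + δ⁻¹ • v)‖ = |supportFn K (y + δ⁻¹ • v)| := rfl
    _ ≤ ‖y + δ⁻¹ • v‖ * D := fpl_abs_supportFn_le hKne hD _
    _ ≤ (‖y‖ + δ⁻¹) * D :=
        mul_le_mul_of_nonneg_right h1 (fpl_D_nonneg hKne hD)

lemma fpl_hasFDerivAt (hKne : K.Nonempty) (hD : ∀ x ∈ K, ‖x‖ ≤ D) (hδ : 0 < δ)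
    (y : EuclideanSpace ℝ (Fin d)) :
    Integrable (fun v => fderiv ℝ (supportFn K) (y + δ⁻¹ • v)) (uniformBallMeasure d) ∧
    HasFDerivAt (smoothedSupportFn K δ)
      (∫ v, fderiv ℝ (supportFn K) (y + δ⁻¹ • v) ∂(uniformBallMeasure d)) y := by
  have hD0 : 0 ≤ D := fpl_D_nonneg hKne hD
  have hlip := fpl_supportFn_lipschitz hKne hD
  have hcont : Continuous (supportFn K) := hlip.continuous
  have hnnabs : (Real.nnabs D) = Real.toNNReal D := by
    ext; simp [Real.coe_toNNReal D hD0, abs_of_nonneg hD0]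
  have key := hasFDerivAt_integral_of_dominated_loc_of_lip
    (μ := uniformBallMeasure d)
    (F := fun x v => supportFn K (x + δ⁻¹ • v))
    (F' := fun v => fderiv ℝ (supportFn K) (y + δ⁻¹ • v))
    (x₀ := y) (bound := fun _ => D) (s := ball y 1) (ball_mem_nhds y one_pos)
    (Filter.Eventually.of_forall fun x =>
      (hcont.comp (continuous_const.add (continuous_const_smul _))).aestronglyMeasurable)
    (fpl_integrable_supp hKne hD hδ y)
    (((measurable_fderiv ℝ (supportFn K)).comp
      (continuous_const.add (continuous_const_smul δ⁻¹)).measurable).aestronglyMeasurable)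
    ?_ (integrable_const D) ?_
  · exact key
  · refine Filter.Eventually.of_forall fun v => ?_
    have htr : LipschitzWith 1 (fun x : EuclideanSpace ℝ (Fin d) => x + δ⁻¹ • v) :=
      LipschitzWith.of_dist_le_mul (fun a b => by simp [dist_add_right])
    have := hlip.comp htr
    rw [mul_one] at this
    rw [hnnabs]
    exact this.lipschitzOnWith
  · have hae : ∀ᵐ w ∂(volume : Measure (EuclideanSpace ℝ (Fin d))),
        DifferentiableAt ℝ (supportFn K) w := hlip.ae_differentiableAt
    have h2 : ∀ᵐ v ∂(volume : Measure (EuclideanSpace ℝ (Fin d))),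
        DifferentiableAt ℝ (supportFn K) (y + δ⁻¹ • v) := (fpl_qmp hδ y).ae hae
    have h3 := fpl_uniform_ac.ae_le h2
    filter_upwards [h3] with v hv
    have h4 : HasFDerivAt (fun x : EuclideanSpace ℝ (Fin d) => x + δ⁻¹ • v)
        (ContinuousLinearMap.id ℝ _) y := (hasFDerivAt_id y).add_const _
    simpa [Function.comp_def] using hv.hasFDerivAt.comp y h4
end D

section E
variable {d : ℕ} {K : Set (EuclideanSpace ℝ (Fin d))} {D δ : ℝ}

lemma fpl_mem_iff (hδ : 0 < δ) (y v : EuclideanSpace ℝ (Fin d)) :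
    v ∈ closedBall (0 : EuclideanSpace ℝ (Fin d)) 1 ↔ y + δ⁻¹ • v ∈ closedBall y δ⁻¹ := by
  rw [mem_closedBall_zero_iff, mem_closedBall, dist_eq_norm, add_sub_cancel_left, norm_smul,
    Real.norm_eq_abs, abs_of_pos (inv_pos.2 hδ)]
  constructor
  · intro h; nlinarith [inv_pos.2 hδ]
  · intro h
    have hδi : (0:ℝ) < δ⁻¹ := inv_pos.2 hδ
    nlinarith

lemma fpl_integral_shift {W : Type*} [NormedAddCommGroup W] [NormedSpace ℝ W]
    (hδ : 0 < δ) (y : EuclideanSpace ℝ (Fin d)) (G : EuclideanSpace ℝ (Fin d) → W) :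
    ∫ v, G (y + δ⁻¹ • v) ∂(uniformBallMeasure d) =
      (δ ^ d * ((volume (closedBall (0 : EuclideanSpace ℝ (Fin d)) 1)).toReal)⁻¹) •
        ∫ w in closedBall y δ⁻¹, G w ∂volume := by
  set B := closedBall (0 : EuclideanSpace ℝ (Fin d)) 1
  set H : EuclideanSpace ℝ (Fin d) → W := (closedBall y δ⁻¹).indicator G with hH
  have h1 : ∫ v, G (y + δ⁻¹ • v) ∂(uniformBallMeasure d)
      = (volume B)⁻¹.toReal • ∫ v in B, G (y + δ⁻¹ • v) ∂volume := by
    rw [uniformBallMeasure, integral_smul_measure]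
  have h2 : ∫ v in B, G (y + δ⁻¹ • v) ∂volume = ∫ v, H (y + δ⁻¹ • v) ∂volume := by
    rw [← integral_indicator (measurableSet_closedBall)]
    congr 1
    ext v
    classical
    simp only [hH, Set.indicator_apply]
    by_cases hv : v ∈ B
    · rw [if_pos hv, if_pos ((fpl_mem_iff hδ y v).1 hv)]
    · rw [if_neg hv, if_neg (fun hc => hv ((fpl_mem_iff hδ y v).2 hc))]
  have h3 : ∫ v, H (y + δ⁻¹ • v) ∂volume = (δ ^ d) • ∫ w, H w ∂volume := by
    have h4 : ∫ v, (fun w => H (y + w)) (δ⁻¹ • v) ∂volume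
        = |((δ⁻¹ ^ Module.finrank ℝ (EuclideanSpace ℝ (Fin d)))⁻¹ : ℝ)| • ∫ w, H (y + w) ∂volume :=
      Measure.integral_comp_smul volume (fun w => H (y + w)) δ⁻¹
    have h5 : ∫ w, H (y + w) ∂(volume : Measure (EuclideanSpace ℝ (Fin d))) = ∫ w, H w ∂volume :=
      integral_add_left_eq_self H y
    rw [h5] at h4
    have h6 : |((δ⁻¹ ^ Module.finrank ℝ (EuclideanSpace ℝ (Fin d)))⁻¹ : ℝ)| = δ ^ d := by
      rw [finrank_euclideanSpace_fin, ← inv_pow, inv_inv, abs_of_pos (pow_pos hδ d)]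
    rw [h6] at h4
    exact h4
  have h7 : ∫ w, H w ∂(volume : Measure (EuclideanSpace ℝ (Fin d)))
      = ∫ w in closedBall y δ⁻¹, G w ∂volume := integral_indicator measurableSet_closedBall
  rw [h1, h2, h3, h7, smul_smul, ENNReal.toReal_inv, mul_comm]
end E

section F
variable {d : ℕ} {K : Set (EuclideanSpace ℝ (Fin d))} {D δ : ℝ}

lemma fpl_vol_cb (x : EuclideanSpace ℝ (Fin d)) {r : ℝ} (hr : 0 ≤ r) :
    (volume (closedBall x r)).toReal
      = r ^ d * (volume (closedBall (0 : EuclideanSpace ℝ (Fin d)) 1)).toReal := by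
  rw [Measure.addHaar_closedBall' volume x hr, ENNReal.toReal_mul,
    ENNReal.toReal_ofReal (pow_nonneg hr _), finrank_euclideanSpace_fin]

lemma fpl_symmdiff_bound (hd1 : 1 ≤ d) {r : ℝ} (hr : 0 < r)
    (y₁ y₂ : EuclideanSpace ℝ (Fin d)) :
    (volume (closedBall y₁ r \ closedBall y₂ r)).toReal ≤
      (r ^ d * (volume (closedBall (0 : EuclideanSpace ℝ (Fin d)) 1)).toReal)
        * (d * ‖y₁ - y₂‖ / (2 * r)) := by
  set a := (volume (closedBall (0 : EuclideanSpace ℝ (Fin d)) 1)).toReal with ha_def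
  have ha : 0 ≤ a := ENNReal.toReal_nonneg
  set u := ‖y₁ - y₂‖ with hu_def
  have hu : 0 ≤ u := norm_nonneg _
  have hA1 : (volume (closedBall y₁ r)).toReal = r ^ d * a := fpl_vol_cb y₁ hr.le
  have hfin : volume (closedBall y₁ r) ≠ ∞ := measure_closedBall_lt_top.ne
  have hsum : volume (closedBall y₁ r ∩ closedBall y₂ r)
      + volume (closedBall y₁ r \ closedBall y₂ r) = volume (closedBall y₁ r) :=
    measure_inter_add_diff _ measurableSet_closedBall
  have hfin1 : volume (closedBall y₁ r ∩ closedBall y₂ r) ≠ ∞ :=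
    (lt_of_le_of_lt (measure_mono Set.inter_subset_left) measure_closedBall_lt_top).ne
  have hfin2 : volume (closedBall y₁ r \ closedBall y₂ r) ≠ ∞ :=
    (lt_of_le_of_lt (measure_mono Set.diff_subset) measure_closedBall_lt_top).ne
  have hsum' : (volume (closedBall y₁ r ∩ closedBall y₂ r)).toReal
      + (volume (closedBall y₁ r \ closedBall y₂ r)).toReal = r ^ d * a := by
    rw [← ENNReal.toReal_add hfin1 hfin2, hsum, hA1]
  by_cases hcase : u ≤ 2 * r
  · -- midpoint ball inside the intersection
    set m := y₁ + (2⁻¹ : ℝ) • (y₂ - y₁) with hm_def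
    have hmy₁ : dist m y₁ = u / 2 := by
      rw [hm_def, dist_eq_norm, add_sub_cancel_left, norm_smul]
      simp [hu_def, norm_sub_rev y₁ y₂]
      ring
    have hmy₂ : dist m y₂ = u / 2 := by
      have : m - y₂ = (2⁻¹ : ℝ) • (y₁ - y₂) := by
        rw [hm_def]
        module
      rw [dist_eq_norm, this, norm_smul]
      simp [hu_def]
      ring
    have hsub : closedBall m (r - u / 2) ⊆ closedBall y₁ r ∩ closedBall y₂ r := by
      intro w hw
      rw [mem_closedBall] at hw
      constructor
      · rw [mem_closedBall]
        calc dist w y₁ ≤ dist w m + dist m y₁ := dist_triangle _ _ _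
          _ ≤ (r - u / 2) + u / 2 := add_le_add hw hmy₁.le
          _ = r := by ring
      · rw [mem_closedBall]
        calc dist w y₂ ≤ dist w m + dist m y₂ := dist_triangle _ _ _
          _ ≤ (r - u / 2) + u / 2 := add_le_add hw hmy₂.le
          _ = r := by ring
    have hru : (0:ℝ) ≤ r - u / 2 := by linarith
    have hinter : (r - u/2) ^ d * a ≤ (volume (closedBall y₁ r ∩ closedBall y₂ r)).toReal := by
      rw [← fpl_vol_cb m hru]
      exact ENNReal.toReal_mono hfin1 (measure_mono hsub)
    -- Bernoulli
    have hbern : r ^ d - (r - u/2) ^ d ≤ r ^ d * (d * u / (2 * r)) := by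
      have hs : u / (2 * r) ≤ 2 := by
        rw [div_le_iff₀ (by positivity)]
        linarith
      have hs0 : 0 ≤ u / (2 * r) := by positivity
      have h1 := one_add_mul_le_pow (a := -(u / (2*r))) (by linarith) d
      have h2 : (1 - u / (2*r)) ^ d * r ^ d = (r - u/2) ^ d := by
        rw [← mul_pow]
        congr 1
        field_simp
      have h3 : (1 + (d:ℝ) * -(u / (2*r))) * r ^ d ≤ (1 + -(u/(2*r))) ^ d * r ^ d := by
        apply mul_le_mul_of_nonneg_right h1 (by positivity)
      rw [show (1 + -(u/(2*r))) = (1 - u/(2*r)) by ring] at h3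
      rw [h2] at h3
      have h4 : (1 + (d:ℝ) * -(u / (2*r))) * r ^ d = r ^ d - r ^ d * (d * u / (2*r)) := by
        ring
      rw [h4] at h3
      linarith
    nlinarith [hinter, hsum', hbern]
  · -- far case: whole ball
    have hd1' : (1:ℝ) ≤ d := by exact_mod_cast hd1
    have hfrac : (1:ℝ) ≤ d * u / (2 * r) := by
      rw [le_div_iff₀ (by positivity)]
      push_neg at hcase
      nlinarith
    have h1 : (volume (closedBall y₁ r \ closedBall y₂ r)).toReal ≤ r ^ d * a := by
      rw [← hA1]
      exact ENNReal.toReal_mono hfin (measure_mono Set.diff_subset)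
    have h2 := mul_le_mul_of_nonneg_left hfrac (mul_nonneg (pow_nonneg hr.le d) ha)
    rw [mul_one] at h2
    linarith
end F

section G
variable {d : ℕ} {K : Set (EuclideanSpace ℝ (Fin d))} {D δ : ℝ}

lemma fpl_fderiv_norm_le (hKne : K.Nonempty) (hD : ∀ x ∈ K, ‖x‖ ≤ D)
    (w : EuclideanSpace ℝ (Fin d)) : ‖fderiv ℝ (supportFn K) w‖ ≤ D := by
  have := norm_fderiv_le_of_lipschitz ℝ (fpl_supportFn_lipschitz hKne hD) (x₀ := w)
  rwa [Real.coe_toNNReal D (fpl_D_nonneg hKne hD)] at this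

lemma fpl_integrableOn_fderiv (hKne : K.Nonempty) (hD : ∀ x ∈ K, ‖x‖ ≤ D)
    {s : Set (EuclideanSpace ℝ (Fin d))} (hs : volume s ≠ ∞) :
    IntegrableOn (fun w => fderiv ℝ (supportFn K) w) s volume := by
  refine Integrable.mono'
    ((integrableOn_const hs : IntegrableOn (fun _ => D) s volume))
    (measurable_fderiv ℝ (supportFn K)).aestronglyMeasurable.restrict ?_
  exact Filter.Eventually.of_forall fun w => fpl_fderiv_norm_le hKne hD w

lemma fpl_Phi_lip (hKne : K.Nonempty) (hD : ∀ x ∈ K, ‖x‖ ≤ D) (hδ : 0 < δ) (hd1 : 1 ≤ d)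
    (y₁ y₂ : EuclideanSpace ℝ (Fin d)) :
    ‖(∫ v, fderiv ℝ (supportFn K) (y₁ + δ⁻¹ • v) ∂(uniformBallMeasure d))
      - ∫ v, fderiv ℝ (supportFn K) (y₂ + δ⁻¹ • v) ∂(uniformBallMeasure d)‖
      ≤ δ * d * D * ‖y₁ - y₂‖ := by
  have hD0 : 0 ≤ D := fpl_D_nonneg hKne hD
  set a := (volume (closedBall (0 : EuclideanSpace ℝ (Fin d)) 1)).toReal with ha_def
  have ha : 0 < a := ENNReal.toReal_pos fpl_volB_pos.ne' fpl_volB_ne_top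
  have hr : (0:ℝ) < δ⁻¹ := inv_pos.2 hδ
  set G := fun w => fderiv ℝ (supportFn K) w with hG_def
  set A₁ := closedBall y₁ δ⁻¹
  set A₂ := closedBall y₂ δ⁻¹
  have hIon : ∀ (s : Set (EuclideanSpace ℝ (Fin d))), s ⊆ A₁ ∪ A₂ → IntegrableOn G s volume := by
    intro s hssub
    apply (fpl_integrableOn_fderiv hKne hD (s := A₁ ∪ A₂) ?_).mono_set hssub
    exact ((measure_union_le _ _).trans_lt
      (by exact ENNReal.add_lt_top.2 ⟨measure_closedBall_lt_top, measure_closedBall_lt_top⟩)).ne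
  have key : ∀ (y : EuclideanSpace ℝ (Fin d)),
      ∫ v, fderiv ℝ (supportFn K) (y + δ⁻¹ • v) ∂(uniformBallMeasure d)
        = (δ ^ d * a⁻¹) • ∫ w in closedBall y δ⁻¹, G w ∂volume := fun y =>
    fpl_integral_shift hδ y G
  rw [key y₁, key y₂, ← smul_sub]
  have hsplit1 : ∫ w in A₁, G w ∂volume
      = (∫ w in A₁ ∩ A₂, G w ∂volume) + ∫ w in A₁ \ A₂, G w ∂volume :=
    (integral_inter_add_diff measurableSet_closedBall (hIon A₁ Set.subset_union_left)).symm
  have hsplit2 : ∫ w in A₂, G w ∂volume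
      = (∫ w in A₁ ∩ A₂, G w ∂volume) + ∫ w in A₂ \ A₁, G w ∂volume := by
    rw [Set.inter_comm]
    exact (integral_inter_add_diff measurableSet_closedBall (hIon A₂ Set.subset_union_right)).symm
  have hdiffeq : (∫ w in A₁, G w ∂volume) - ∫ w in A₂, G w ∂volume
      = (∫ w in A₁ \ A₂, G w ∂volume) - ∫ w in A₂ \ A₁, G w ∂volume := by
    rw [hsplit1, hsplit2]; abel
  have hbound : ∀ (s : Set (EuclideanSpace ℝ (Fin d))), volume s ≠ ∞ →
      ‖∫ w in s, G w ∂volume‖ ≤ D * (volume s).toReal := by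
    intro s hs
    exact norm_setIntegral_le_of_norm_le_const hs.lt_top
      (fun w _ => fpl_fderiv_norm_le hKne hD w)
  have hfin12 : volume (A₁ \ A₂) ≠ ∞ :=
    ((measure_mono Set.diff_subset).trans_lt measure_closedBall_lt_top).ne
  have hfin21 : volume (A₂ \ A₁) ≠ ∞ :=
    ((measure_mono Set.diff_subset).trans_lt measure_closedBall_lt_top).ne
  have hv12 : (volume (A₁ \ A₂)).toReal ≤ (δ⁻¹ ^ d * a) * (d * ‖y₁ - y₂‖ / (2 * δ⁻¹)) :=
    fpl_symmdiff_bound hd1 hr y₁ y₂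
  have hv21 : (volume (A₂ \ A₁)).toReal ≤ (δ⁻¹ ^ d * a) * (d * ‖y₁ - y₂‖ / (2 * δ⁻¹)) := by
    have := fpl_symmdiff_bound hd1 hr y₂ y₁
    rwa [norm_sub_rev] at this
  have hnorm : ‖(∫ w in A₁, G w ∂volume) - ∫ w in A₂, G w ∂volume‖
      ≤ 2 * (D * ((δ⁻¹ ^ d * a) * (d * ‖y₁ - y₂‖ / (2 * δ⁻¹)))) := by
    rw [hdiffeq]
    calc ‖(∫ w in A₁ \ A₂, G w ∂volume) - ∫ w in A₂ \ A₁, G w ∂volume‖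
        ≤ ‖∫ w in A₁ \ A₂, G w ∂volume‖ + ‖∫ w in A₂ \ A₁, G w ∂volume‖ := norm_sub_le _ _
      _ ≤ D * (volume (A₁ \ A₂)).toReal + D * (volume (A₂ \ A₁)).toReal :=
          add_le_add (hbound _ hfin12) (hbound _ hfin21)
      _ ≤ 2 * (D * ((δ⁻¹ ^ d * a) * (d * ‖y₁ - y₂‖ / (2 * δ⁻¹)))) := by
          have h1 := mul_le_mul_of_nonneg_left hv12 hD0
          have h2 := mul_le_mul_of_nonneg_left hv21 hD0
          linarith
  rw [norm_smul, Real.norm_eq_abs, abs_of_nonneg (by positivity)]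
  calc (δ ^ d * a⁻¹) * ‖(∫ w in A₁, G w ∂volume) - ∫ w in A₂, G w ∂volume‖
      ≤ (δ ^ d * a⁻¹) * (2 * (D * ((δ⁻¹ ^ d * a) * (d * ‖y₁ - y₂‖ / (2 * δ⁻¹))))) :=
        mul_le_mul_of_nonneg_left hnorm (by positivity)
    _ = δ * d * D * ‖y₁ - y₂‖ := by
        field_simp
        rw [mul_comm (δ ^ d) D, mul_assoc D, ← mul_pow, mul_one_div_cancel hδ.ne', one_pow, mul_one]
end G

section H
variable {d : ℕ} {K : Set (EuclideanSpace ℝ (Fin d))} {D δ : ℝ}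

/-- Descent lemma from Lipschitz derivative. -/
lemma fpl_descent {h : EuclideanSpace ℝ (Fin d) → ℝ}
    {Φ : EuclideanSpace ℝ (Fin d) → (EuclideanSpace ℝ (Fin d) →L[ℝ] ℝ)} {L : ℝ} (hL : 0 ≤ L)
    (hF : ∀ y, HasFDerivAt h (Φ y) y)
    (hLip : ∀ y₁ y₂, ‖Φ y₁ - Φ y₂‖ ≤ L * ‖y₁ - y₂‖) (a b : EuclideanSpace ℝ (Fin d)) :
    h b ≤ h a + Φ a (b - a) + L / 2 * ‖b - a‖ ^ 2 := by
  set u := b - a with hu_def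
  have hΦc : Continuous Φ := by
    apply (LipschitzWith.of_dist_le_mul (K := L.toNNReal) ?_).continuous
    intro y₁ y₂
    rw [dist_eq_norm, dist_eq_norm, Real.coe_toNNReal L hL]
    exact hLip y₁ y₂
  have hcurve : Continuous (fun t : ℝ => a + t • u) :=
    continuous_const.add (continuous_id.smul continuous_const)
  have hφ'c : Continuous (fun t : ℝ => Φ (a + t • u) u) :=
    ((ContinuousLinearMap.apply ℝ ℝ u).continuous).comp (hΦc.comp hcurve)
  have hg : ∀ t : ℝ, HasDerivAt (fun t : ℝ => h (a + t • u)) (Φ (a + t • u) u) t := by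
    intro t
    have h2 : HasDerivAt (fun t : ℝ => a + t • u) u t := by
      simpa using ((hasDerivAt_id t).smul_const u).const_add a
    exact (hF (a + t • u)).comp_hasDerivAt t h2
  have hFTC : ∫ t in (0:ℝ)..1, Φ (a + t • u) u
      = h (a + (1:ℝ) • u) - h (a + (0:ℝ) • u) :=
    intervalIntegral.integral_eq_sub_of_hasDerivAt (fun t _ => hg t)
      (hφ'c.intervalIntegrable 0 1)
  have hab : a + (1:ℝ) • u = b := by rw [one_smul, hu_def]; abel
  have ha0 : a + (0:ℝ) • u = a := by rw [zero_smul, add_zero]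
  rw [hab, ha0] at hFTC
  have hintmono : ∫ t in (0:ℝ)..1, (Φ (a + t • u) u - Φ a u)
      ≤ ∫ t in (0:ℝ)..1, L * ‖u‖ ^ 2 * t := by
    apply intervalIntegral.integral_mono_on zero_le_one
    · exact (hφ'c.sub continuous_const).intervalIntegrable 0 1
    · exact (continuous_const.mul continuous_id).intervalIntegrable 0 1
    · intro t ht
      obtain ⟨ht0, ht1⟩ := ht
      calc Φ (a + t • u) u - Φ a u = (Φ (a + t • u) - Φ a) u := by simp
        _ ≤ ‖(Φ (a + t • u) - Φ a) u‖ := le_abs_self _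
        _ ≤ ‖Φ (a + t • u) - Φ a‖ * ‖u‖ := (Φ (a + t • u) - Φ a).le_opNorm u
        _ ≤ (L * ‖a + t • u - a‖) * ‖u‖ :=
            mul_le_mul_of_nonneg_right (hLip _ _) (norm_nonneg _)
        _ = L * ‖u‖ ^ 2 * t := by
            rw [add_sub_cancel_left, norm_smul, Real.norm_eq_abs, abs_of_nonneg ht0]
            ring
  have hsub : ∫ t in (0:ℝ)..1, (Φ (a + t • u) u - Φ a u)
      = (h b - h a) - Φ a u := by
    rw [intervalIntegral.integral_sub (hφ'c.intervalIntegrable 0 1)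
      (intervalIntegrable_const), hFTC]
    simp
  have hval : ∫ t in (0:ℝ)..1, L * ‖u‖ ^ 2 * t = L / 2 * ‖u‖ ^ 2 := by
    rw [intervalIntegral.integral_const_mul, integral_id]
    ring
  rw [hsub, hval] at hintmono
  linarith

lemma fpl_smoothed_ge (hKne : K.Nonempty) (hD : ∀ x ∈ K, ‖x‖ ≤ D) (hδ : 0 < δ)
    (y : EuclideanSpace ℝ (Fin d)) :
    supportFn K y - D / δ ≤ smoothedSupportFn K δ y := by
  have hD0 : 0 ≤ D := fpl_D_nonneg hKne hD
  have hae : ∀ᵐ v ∂(uniformBallMeasure d),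
      supportFn K y - D / δ ≤ supportFn K (y + δ⁻¹ • v) := by
    filter_upwards [fpl_ae_mem_ball] with v hv
    have h1 := fpl_supportFn_sub_le hKne hD y (y + δ⁻¹ • v)
    have h2 : ‖y - (y + δ⁻¹ • v)‖ = δ⁻¹ * ‖v‖ := by
      rw [show y - (y + δ⁻¹ • v) = -(δ⁻¹ • v) by abel, norm_neg, norm_smul,
        Real.norm_eq_abs, abs_of_pos (inv_pos.2 hδ)]
    have h3 : ‖v‖ ≤ 1 := mem_closedBall_zero_iff.1 hv
    have h4 : D * (δ⁻¹ * ‖v‖) ≤ D / δ := by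
      rw [div_eq_mul_inv]
      have h5 := mul_le_mul_of_nonneg_left h3 (mul_nonneg hD0 (inv_nonneg.2 hδ.le))
      calc D * (δ⁻¹ * ‖v‖) = D * δ⁻¹ * ‖v‖ := by ring
        _ ≤ D * δ⁻¹ * 1 := by linarith
        _ = D * δ⁻¹ := mul_one _
    rw [h2] at h1
    linarith
  have := integral_mono_ae (integrable_const (supportFn K y - D / δ))
    (fpl_integrable_supp hKne hD hδ y) hae
  simpa [smoothedSupportFn] using this

lemma fpl_smoothed_zero_le (hKne : K.Nonempty) (hD : ∀ x ∈ K, ‖x‖ ≤ D) (hδ : 0 < δ) :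
    smoothedSupportFn K δ (0 : EuclideanSpace ℝ (Fin d)) ≤ D / δ := by
  have hD0 : 0 ≤ D := fpl_D_nonneg hKne hD
  have hae : ∀ᵐ v ∂(uniformBallMeasure d),
      supportFn K ((0 : EuclideanSpace ℝ (Fin d)) + δ⁻¹ • v) ≤ D / δ := by
    filter_upwards [fpl_ae_mem_ball] with v hv
    have h1 := fpl_supportFn_sub_le hKne hD ((0 : EuclideanSpace ℝ (Fin d)) + δ⁻¹ • v) 0
    rw [fpl_supportFn_zero hKne, sub_zero, sub_zero, zero_add, norm_smul,
      Real.norm_eq_abs, abs_of_pos (inv_pos.2 hδ)] at h1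
    have h3 : ‖v‖ ≤ 1 := mem_closedBall_zero_iff.1 hv
    have h4 : D * (δ⁻¹ * ‖v‖) ≤ D / δ := by
      rw [div_eq_mul_inv]
      have h5 := mul_le_mul_of_nonneg_left h3 (mul_nonneg hD0 (inv_nonneg.2 hδ.le))
      calc D * (δ⁻¹ * ‖v‖) = D * δ⁻¹ * ‖v‖ := by ring
        _ ≤ D * δ⁻¹ * 1 := by linarith
        _ = D * δ⁻¹ := mul_one _
    rw [zero_add]
    linarith
  have := integral_mono_ae (fpl_integrable_supp hKne hD hδ 0)
    (integrable_const (D / δ)) hae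
  simpa [smoothedSupportFn] using this

/-- Gradient inequality for convex differentiable functions. -/
lemma fpl_convex_grad {f : EuclideanSpace ℝ (Fin d) → ℝ}
    (hconv : ConvexOn ℝ Set.univ f) (hdiff : ∀ w, DifferentiableAt ℝ f w)
    (x z : EuclideanSpace ℝ (Fin d)) :
    f x + ⟪gradient f x, z - x⟫ ≤ f z := by
  set φ : ℝ → ℝ := fun t => f (x + t • (z - x)) with hφ_def
  have hφconv : ConvexOn ℝ Set.univ φ := by
    have := hconv.comp_affineMap
      (AffineMap.lineMap x z : ℝ →ᵃ[ℝ] EuclideanSpace ℝ (Fin d))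
    have heq : (f ∘ (AffineMap.lineMap x z : ℝ →ᵃ[ℝ] EuclideanSpace ℝ (Fin d))) = φ := by
      ext t
      simp [hφ_def, AffineMap.lineMap_apply]
      congr 1
      module
    rw [heq] at this
    simpa using this
  have hφd : HasDerivAt φ (⟪gradient f x, z - x⟫) 0 := by
    have h1 : HasFDerivAt f (InnerProductSpace.toDual ℝ _ (gradient f x)) x :=
      ((hdiff x).hasGradientAt).hasFDerivAt
    have h2 : HasDerivAt (fun t : ℝ => x + t • (z - x)) (z - x) 0 := by
      simpa using ((hasDerivAt_id (0:ℝ)).smul_const (z - x)).const_add x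
    have h3 : x = x + (0:ℝ) • (z - x) := by rw [zero_smul, add_zero]
    rw [h3] at h1
    have := h1.comp_hasDerivAt (0:ℝ) h2
    simp [InnerProductSpace.toDual_apply_apply] at this ⊢; exact this
  have hslope := hφconv.le_slope_of_hasDerivAt (Set.mem_univ (0:ℝ)) (Set.mem_univ (1:ℝ))
    zero_lt_one hφd
  rw [slope_def_field] at hslope
  have hφ0 : φ 0 = f x := by simp [hφ_def]
  have hφ1 : φ 1 = f z := by simp [hφ_def]
  rw [hφ0, hφ1] at hslope
  have : ⟪gradient f x, z - x⟫ ≤ f z - f x := by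
    have h5 : (f z - f x) / (1 - 0) = f z - f x := by norm_num
    rw [h5] at hslope
    linarith
  linarith
end H

/-- Regret of expected Follow-the-Perturbed-Leader. If the iterates satisfy
`x_t = ∇h_δ^*(− Σ_{s<t} ∇f_s(x_s))`, then the regret is at most `2D/δ + (δ d D/2) G² T`. -/
theorem expected_FPL_regret (d T : ℕ) (K : Set (EuclideanSpace ℝ (Fin d)))
    (hKne : K.Nonempty) (hKconv : Convex ℝ K) (hKcomp : IsCompact K)
    (D δ G : ℝ) (hD : ∀ x ∈ K, ‖x‖ ≤ D) (hδ : 0 < δ)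
    (f : ℕ → EuclideanSpace ℝ (Fin d) → ℝ)
    (hconv : ∀ t, ConvexOn ℝ Set.univ (f t))
    (hdiff : ∀ t (x : EuclideanSpace ℝ (Fin d)), DifferentiableAt ℝ (f t) x)
    (hG : ∀ t, ∀ x ∈ K, ‖gradient (f t) x‖ ≤ G)
    (x : ℕ → EuclideanSpace ℝ (Fin d))
    (hxK : ∀ t, x t ∈ K)
    (hx : ∀ t, x t = gradient (smoothedSupportFn K δ)
      (-(∑ s ∈ Finset.range t, gradient (f s) (x s)))) :
    ∀ z ∈ K, ∑ t ∈ Finset.range T, f t (x t) - ∑ t ∈ Finset.range T, f t z ≤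
      2 * D / δ + (δ * d * D / 2) * G ^ 2 * T := by
  intro z hz
  have hD0 : 0 ≤ D := fpl_D_nonneg hKne hD
  by_cases hd : d = 0
  · subst hd
    have hxz : ∀ t, x t = z := fun t => Subsingleton.elim _ _
    have hsum : ∑ t ∈ Finset.range T, f t (x t) = ∑ t ∈ Finset.range T, f t z :=
      Finset.sum_congr rfl fun t _ => by rw [hxz t]
    rw [hsum, sub_self]
    have h1 : (0:ℝ) ≤ 2 * D / δ := by positivity
    simp only [Nat.cast_zero]
    nlinarith
  · have hd1 : 1 ≤ d := Nat.one_le_iff_ne_zero.2 hd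
    set L := δ * (d : ℝ) * D with hL_def
    have hL0 : 0 ≤ L := by positivity
    set hstar := smoothedSupportFn K δ with hhstar_def
    set g : ℕ → EuclideanSpace ℝ (Fin d) := fun t => gradient (f t) (x t) with hg_def
    set Θ : ℕ → EuclideanSpace ℝ (Fin d) :=
      fun t => -(∑ s ∈ Finset.range t, g s) with hΘ_def
    set Φ : EuclideanSpace ℝ (Fin d) → (EuclideanSpace ℝ (Fin d) →L[ℝ] ℝ) :=
      fun y => ∫ v, fderiv ℝ (supportFn K) (y + δ⁻¹ • v) ∂(uniformBallMeasure d) with hΦ_def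
    have hHF : ∀ y, HasFDerivAt hstar (Φ y) y := fun y => (fpl_hasFDerivAt hKne hD hδ y).2
    have hΦLip : ∀ y₁ y₂, ‖Φ y₁ - Φ y₂‖ ≤ L * ‖y₁ - y₂‖ := fun y₁ y₂ => by
      simpa [hL_def, mul_assoc] using fpl_Phi_lip hKne hD hδ hd1 y₁ y₂
    have hgrad_eq : ∀ y, gradient hstar y
        = (InnerProductSpace.toDual ℝ (EuclideanSpace ℝ (Fin d))).symm (Φ y) := fun y =>
      ((hasFDerivAt_iff_hasGradientAt).1 (hHF y)).gradient
    have hinner_eq : ∀ y w, ⟪gradient hstar y, w⟫ = Φ y w := by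
      intro y w
      rw [hgrad_eq y, InnerProductSpace.toDual_symm_apply]
    have hxt : ∀ t, x t = gradient hstar (Θ t) := fun t => hx t
    have hG0 : 0 ≤ G := (norm_nonneg _).trans (hG 0 (x 0) (hxK 0))
    have hgnorm : ∀ t, ‖g t‖ ≤ G := fun t => hG t (x t) (hxK t)
    -- per-step inequality
    have hstep : ∀ t, ⟪g t, x t⟫ ≤ hstar (Θ t) - hstar (Θ (t+1)) + L / 2 * G ^ 2 := by
      intro t
      have hΘsucc : Θ (t+1) - Θ t = -(g t) := by
        rw [hΘ_def]
        simp only [Finset.sum_range_succ]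
        abel
      have hdesc := fpl_descent hL0 hHF hΦLip (Θ t) (Θ (t+1))
      rw [hΘsucc] at hdesc
      have hval : Φ (Θ t) (-(g t)) = -⟪g t, x t⟫ := by
        rw [← hinner_eq (Θ t) (-(g t)), ← hxt t, inner_neg_right, real_inner_comm]
      rw [hval] at hdesc
      have hnormsq : ‖-(g t)‖ ^ 2 ≤ G ^ 2 := by
        rw [norm_neg]
        exact pow_le_pow_left₀ (norm_nonneg _) (hgnorm t) 2
      nlinarith
    -- telescoping sum
    have htel : ∑ t ∈ Finset.range T, (hstar (Θ t) - hstar (Θ (t+1)))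
        = hstar (Θ 0) - hstar (Θ T) := Finset.sum_range_sub' (fun t => hstar (Θ t)) T
    have hsum_step : ∑ t ∈ Finset.range T, ⟪g t, x t⟫
        ≤ hstar (Θ 0) - hstar (Θ T) + T * (L / 2 * G ^ 2) := by
      calc ∑ t ∈ Finset.range T, ⟪g t, x t⟫
          ≤ ∑ t ∈ Finset.range T, (hstar (Θ t) - hstar (Θ (t+1)) + L / 2 * G ^ 2) :=
            Finset.sum_le_sum fun t _ => hstep t
        _ = (∑ t ∈ Finset.range T, (hstar (Θ t) - hstar (Θ (t+1)))) + T * (L / 2 * G ^ 2) := by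
            rw [Finset.sum_add_distrib, Finset.sum_const, Finset.card_range, nsmul_eq_mul]
        _ = hstar (Θ 0) - hstar (Θ T) + T * (L / 2 * G ^ 2) := by rw [htel]
    -- convexity
    have hconv_step : ∀ t, f t (x t) - f t z ≤ ⟪g t, x t⟫ - ⟪g t, z⟫ := by
      intro t
      have := fpl_convex_grad (hconv t) (hdiff t) (x t) z
      have h2 : ⟪g t, z - x t⟫ = ⟪g t, z⟫ - ⟪g t, x t⟫ := inner_sub_right _ _ _
      rw [hg_def] at h2 ⊢
      linarith [this, h2.symm.le]
    -- putting it together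
    have hinner_sum : ∑ t ∈ Finset.range T, ⟪g t, z⟫ = -⟪Θ T, z⟫ := by
      rw [hΘ_def]
      simp only [inner_neg_left, neg_neg]
      rw [sum_inner]
    have hΘ0 : Θ 0 = 0 := by simp [hΘ_def]
    have hMle : ⟪Θ T, z⟫ ≤ hstar (Θ T) + D / δ := by
      have h1 := fpl_inner_le_supportFn hD hz (Θ T)
      have h2 := fpl_smoothed_ge hKne hD hδ (Θ T)
      rw [← hhstar_def] at h2
      linarith
    have hh0 : hstar (Θ 0) ≤ D / δ := by
      rw [hΘ0]
      exact fpl_smoothed_zero_le hKne hD hδ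
    calc ∑ t ∈ Finset.range T, f t (x t) - ∑ t ∈ Finset.range T, f t z
        = ∑ t ∈ Finset.range T, (f t (x t) - f t z) := (Finset.sum_sub_distrib _ _).symm
      _ ≤ ∑ t ∈ Finset.range T, (⟪g t, x t⟫ - ⟪g t, z⟫) :=
          Finset.sum_le_sum fun t _ => hconv_step t
      _ = (∑ t ∈ Finset.range T, ⟪g t, x t⟫) - ∑ t ∈ Finset.range T, ⟪g t, z⟫ :=
          Finset.sum_sub_distrib _ _
      _ = (∑ t ∈ Finset.range T, ⟪g t, x t⟫) + ⟪Θ T, z⟫ := by rw [hinner_sum]; ring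
      _ ≤ (hstar (Θ 0) - hstar (Θ T) + T * (L / 2 * G ^ 2)) + (hstar (Θ T) + D / δ) :=
          add_le_add hsum_step hMle
      _ = hstar (Θ 0) + D / δ + T * (L / 2 * G ^ 2) := by ring
      _ ≤ D / δ + D / δ + T * (L / 2 * G ^ 2) := by linarith
      _ = 2 * D / δ + (δ * d * D / 2) * G ^ 2 * T := by rw [hL_def]; ring
end

section
/- Let Z₁, …, Z_m be i.i.d. random vectors in ℝ^d with ‖Z_j‖ ≤ D almost surely and mean x̂ = E[Z₁], and let X̄ = (1/m) Σ_{j=1}^m Z_j. Let f : ℝ^d → ℝ be differentiable with ‖∇f(x)‖ ≤ G for all x in the closed ball of radius D. Then E[⟨∇f(X̄), x̂ − X̄⟩] ≤ 2GD/√m. -/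
open MeasureTheory ProbabilityTheory Metric
open scoped RealInnerProductSpace

lemma indep_integral_inner {Ω : Type*} [MeasurableSpace Ω] {μ : Measure Ω} {d : ℕ}
    (X Y : Ω → EuclideanSpace ℝ (Fin d))
    (hX : Integrable X μ) (hY : Integrable Y μ)
    (hind : IndepFun X Y μ) :
    ∫ ω, ⟪X ω, Y ω⟫ ∂μ = ⟪∫ ω, X ω ∂μ, ∫ ω, Y ω ∂μ⟫ := by
  have h1 : ∀ ω, ⟪X ω, Y ω⟫ = ∑ i : Fin d, X ω i * Y ω i := fun ω => by
    simp [PiLp.inner_apply, RCLike.inner_apply]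
    exact Finset.sum_congr rfl (fun _ _ => mul_comm _ _)
  have hXi : ∀ i : Fin d, Integrable (fun ω => X ω i) μ := fun i =>
    (EuclideanSpace.proj i : EuclideanSpace ℝ (Fin d) →L[ℝ] ℝ).integrable_comp hX
  have hYi : ∀ i : Fin d, Integrable (fun ω => Y ω i) μ := fun i =>
    (EuclideanSpace.proj i : EuclideanSpace ℝ (Fin d) →L[ℝ] ℝ).integrable_comp hY
  have hindi : ∀ i : Fin d, IndepFun (fun ω => X ω i) (fun ω => Y ω i) μ := fun i => by
    have h := hind.comp (φ := fun x : EuclideanSpace ℝ (Fin d) => x i)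
      (ψ := fun x : EuclideanSpace ℝ (Fin d) => x i)
      (EuclideanSpace.proj i : EuclideanSpace ℝ (Fin d) →L[ℝ] ℝ).continuous.measurable
      (EuclideanSpace.proj i : EuclideanSpace ℝ (Fin d) →L[ℝ] ℝ).continuous.measurable
    exact h
  calc ∫ ω, ⟪X ω, Y ω⟫ ∂μ = ∫ ω, ∑ i : Fin d, X ω i * Y ω i ∂μ := by simp_rw [h1]
    _ = ∑ i : Fin d, ∫ ω, X ω i * Y ω i ∂μ :=
        integral_finset_sum _ (fun i _ => IndepFun.integrable_mul (hindi i) (hXi i) (hYi i))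
    _ = ∑ i : Fin d, (∫ ω, X ω i ∂μ) * (∫ ω, Y ω i ∂μ) := by
        refine Finset.sum_congr rfl (fun i _ => ?_)
        exact (hindi i).integral_mul_eq_mul_integral (hXi i).1 (hYi i).1
    _ = ⟪∫ ω, X ω ∂μ, ∫ ω, Y ω ∂μ⟫ := by
        simp only [PiLp.inner_apply, RCLike.inner_apply]
        refine Finset.sum_congr rfl (fun i _ => ?_)
        have hx := ((EuclideanSpace.proj i : EuclideanSpace ℝ (Fin d) →L[ℝ] ℝ)).integral_comp_comm hX
        have hy := ((EuclideanSpace.proj i : EuclideanSpace ℝ (Fin d) →L[ℝ] ℝ)).integral_comp_comm hY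
        exact (congrArg₂ (· * ·) hx hy).trans (mul_comm _ _)

/-- For i.i.d. random vectors `Z₁, …, Z_m` in `ℝ^d` bounded by `D` with mean
`x̂`, empirical average `X̄`, and `f` differentiable with `‖∇f‖ ≤ G` on the closed ball of
radius `D`, one has `E[⟨∇f(X̄), x̂ − X̄⟩] ≤ 2GD/√m`. -/
theorem estimation_error_convex (d m : ℕ) (hm : 0 < m) (D G : ℝ)
    {Ω : Type*} [MeasurableSpace Ω] (μ : Measure Ω) [IsProbabilityMeasure μ]
    (Z : Fin m → Ω → EuclideanSpace ℝ (Fin d))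
    (hmeas : ∀ j, Measurable (Z j))
    (hindep : iIndepFun Z μ)
    (hident : ∀ i j, IdentDistrib (Z i) (Z j) μ μ)
    (hbdd : ∀ j, ∀ᵐ ω ∂μ, ‖Z j ω‖ ≤ D)
    (xhat : EuclideanSpace ℝ (Fin d))
    (hmean : ∀ j, ∫ ω, Z j ω ∂μ = xhat)
    (f : EuclideanSpace ℝ (Fin d) → ℝ)
    (hdiff : ∀ x : EuclideanSpace ℝ (Fin d), DifferentiableAt ℝ f x)
    (hG : ∀ x ∈ Metric.closedBall (0 : EuclideanSpace ℝ (Fin d)) D, ‖gradient f x‖ ≤ G) :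
    ∫ ω, ⟪gradient f ((m : ℝ)⁻¹ • ∑ j, Z j ω), xhat - (m : ℝ)⁻¹ • ∑ j, Z j ω⟫ ∂μ ≤
      2 * G * D / Real.sqrt m := by
  classical
  have hmR : (0 : ℝ) < m := Nat.cast_pos.mpr hm
  have hmne : (m : ℝ) ≠ 0 := ne_of_gt hmR
  have hμ : μ ≠ 0 := IsProbabilityMeasure.ne_zero μ
  have : (MeasureTheory.ae μ).NeBot := ae_neBot.mpr hμ
  let j0 : Fin m := ⟨0, hm⟩
  obtain ⟨ω0, hω0⟩ := (hbdd j0).exists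
  have hD0 : 0 ≤ D := le_trans (norm_nonneg _) hω0
  have hG0 : 0 ≤ G := le_trans (norm_nonneg _) (hG 0 (mem_closedBall_self hD0))
  have hintZ : ∀ j, Integrable (Z j) μ := fun j =>
    ⟨(hmeas j).aestronglyMeasurable, HasFiniteIntegral.of_bounded (hbdd j)⟩
  have hxhat : ‖xhat‖ ≤ D := by
    rw [← hmean j0]
    calc ‖∫ ω, Z j0 ω ∂μ‖ ≤ D * (μ Set.univ).toReal :=
          norm_integral_le_of_norm_le_const (hbdd j0)
      _ = D := by simp
  set A : Ω → EuclideanSpace ℝ (Fin d) := fun ω => (m:ℝ)⁻¹ • ∑ j, Z j ω with hA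
  have hAmeas : Measurable A :=
    (Finset.univ.measurable_sum (fun j _ => hmeas j)).const_smul ((m:ℝ)⁻¹)
  have hbdd' : ∀ᵐ ω ∂μ, ∀ j, ‖Z j ω‖ ≤ D := ae_all_iff.2 hbdd
  have hAbdd : ∀ᵐ ω ∂μ, ‖A ω‖ ≤ D := by
    filter_upwards [hbdd'] with ω h
    have h1 : ‖∑ j, Z j ω‖ ≤ m * D := by
      calc ‖∑ j, Z j ω‖ ≤ ∑ j, ‖Z j ω‖ := norm_sum_le _ _
        _ ≤ ∑ _j : Fin m, D := Finset.sum_le_sum (fun j _ => h j)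
        _ = m * D := by simp [Finset.sum_const, nsmul_eq_mul]
    calc ‖A ω‖ = (m:ℝ)⁻¹ * ‖∑ j, Z j ω‖ := by
          rw [hA]; simp [norm_smul, abs_of_nonneg (inv_nonneg.mpr hmR.le)]
      _ ≤ (m:ℝ)⁻¹ * (m * D) := by
          exact mul_le_mul_of_nonneg_left h1 (inv_nonneg.mpr hmR.le)
      _ = D := by field_simp
  have hgradmeas : Measurable (gradient f) := by
    exact ((InnerProductSpace.toDual ℝ
      (EuclideanSpace ℝ (Fin d))).symm.continuous.measurable).comp (measurable_fderiv ℝ f)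
  set Y : Ω → ℝ := fun ω => ‖xhat - A ω‖ with hYdef
  have hYmeas : Measurable Y := (measurable_const.sub hAmeas).norm
  have hYbdd : ∀ᵐ ω ∂μ, ‖Y ω‖ ≤ 2 * D := by
    filter_upwards [hAbdd] with ω h
    rw [hYdef, norm_norm]
    calc ‖xhat - A ω‖ ≤ ‖xhat‖ + ‖A ω‖ := norm_sub_le _ _
      _ ≤ 2 * D := by linarith
  have hYint : Integrable Y μ :=
    ⟨hYmeas.aestronglyMeasurable, HasFiniteIntegral.of_bounded hYbdd⟩
  have hEY0 : 0 ≤ ∫ ω, Y ω ∂μ := integral_nonneg (fun ω => norm_nonneg _)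
  -- Step 1: pointwise bound via Cauchy-Schwarz and gradient bound
  have hinnermeas : Measurable (fun ω => ⟪gradient f (A ω), xhat - A ω⟫) :=
    (hgradmeas.comp hAmeas).inner (measurable_const.sub hAmeas)
  have hinnerint : Integrable (fun ω => ⟪gradient f (A ω), xhat - A ω⟫) μ := by
    refine ⟨hinnermeas.aestronglyMeasurable, HasFiniteIntegral.of_bounded (C := G * (2 * D)) ?_⟩
    filter_upwards [hAbdd, hYbdd] with ω h h2
    rw [norm_norm] at h2
    calc ‖⟪gradient f (A ω), xhat - A ω⟫‖ ≤ ‖gradient f (A ω)‖ * ‖xhat - A ω‖ :=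
          norm_inner_le_norm _ _
      _ ≤ G * (2 * D) := by
          exact mul_le_mul (hG _ (mem_closedBall_zero_iff.2 h)) h2 (norm_nonneg _) hG0
  have hptwise : ∀ᵐ ω ∂μ, ⟪gradient f (A ω), xhat - A ω⟫ ≤ G * Y ω := by
    filter_upwards [hAbdd] with ω h
    calc ⟪gradient f (A ω), xhat - A ω⟫ ≤ ‖gradient f (A ω)‖ * ‖xhat - A ω‖ :=
          real_inner_le_norm _ _
      _ ≤ G * Y ω :=
          mul_le_mul_of_nonneg_right (hG _ (mem_closedBall_zero_iff.2 h)) (norm_nonneg _)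
  have step1 : ∫ ω, ⟪gradient f (A ω), xhat - A ω⟫ ∂μ ≤ G * ∫ ω, Y ω ∂μ := by
    calc ∫ ω, ⟪gradient f (A ω), xhat - A ω⟫ ∂μ ≤ ∫ ω, G * Y ω ∂μ :=
          integral_mono_ae hinnerint (hYint.const_mul G) hptwise
      _ = G * ∫ ω, Y ω ∂μ := integral_const_mul G _
  -- Step 2: second moment bound
  set W : Fin m → Ω → EuclideanSpace ℝ (Fin d) := fun j ω => xhat - Z j ω with hWdef
  have hWmeas : ∀ j, Measurable (W j) := fun j => measurable_const.sub (hmeas j)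
  have hWint : ∀ j, Integrable (W j) μ := fun j => (integrable_const xhat).sub (hintZ j)
  have hWmean : ∀ j, ∫ ω, W j ω ∂μ = 0 := fun j => by
    rw [hWdef]
    simp only
    rw [integral_sub (integrable_const xhat) (hintZ j), hmean j, integral_const]
    simp
  have hWbdd : ∀ j, ∀ᵐ ω ∂μ, ‖W j ω‖ ≤ 2 * D := fun j => by
    filter_upwards [hbdd j] with ω h
    calc ‖xhat - Z j ω‖ ≤ ‖xhat‖ + ‖Z j ω‖ := norm_sub_le _ _
      _ ≤ 2 * D := by linarith
  have hWindep : ∀ i j, i ≠ j → IndepFun (W i) (W j) μ := fun i j hij => by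
    have h := (hindep.indepFun hij).comp
      (φ := fun x : EuclideanSpace ℝ (Fin d) => xhat - x)
      (ψ := fun x : EuclideanSpace ℝ (Fin d) => xhat - x)
      (measurable_const.sub measurable_id) (measurable_const.sub measurable_id)
    exact h
  have hpairmeas : ∀ i j, Measurable (fun ω => ⟪W i ω, W j ω⟫) := fun i j =>
    (hWmeas i).inner (hWmeas j)
  have hpairint : ∀ i j, Integrable (fun ω => ⟪W i ω, W j ω⟫) μ := fun i j => by
    refine ⟨(hpairmeas i j).aestronglyMeasurable,
      HasFiniteIntegral.of_bounded (C := (2*D) * (2*D)) ?_⟩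
    filter_upwards [hWbdd i, hWbdd j] with ω h1 h2
    calc ‖⟪W i ω, W j ω⟫‖ ≤ ‖W i ω‖ * ‖W j ω‖ := norm_inner_le_norm _ _
      _ ≤ (2*D) * (2*D) := mul_le_mul h1 h2 (norm_nonneg _) (by linarith)
  have hId : ∀ ω, xhat - A ω = (m:ℝ)⁻¹ • ∑ j, W j ω := by
    intro ω
    rw [hWdef, hA]
    simp only [Finset.sum_sub_distrib, Finset.sum_const, Finset.card_univ, Fintype.card_fin,
      smul_sub]
    congr 1
    rw [← Nat.cast_smul_eq_nsmul ℝ m xhat, smul_smul, inv_mul_cancel₀ hmne, one_smul]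
  have hYsq : ∀ ω, Y ω ^ 2 = ((m:ℝ)^2)⁻¹ * ∑ i, ∑ j, ⟪W i ω, W j ω⟫ := by
    intro ω
    have h0 : Y ω ^ 2 = ⟪xhat - A ω, xhat - A ω⟫ := (real_inner_self_eq_norm_sq _).symm
    rw [h0, hId ω, real_inner_smul_left, real_inner_smul_right, sum_inner]
    simp_rw [inner_sum]
    ring
  have hkey : ∫ ω, Y ω ^ 2 ∂μ ≤ 4 * D^2 / m := by
    have hsum : ∫ ω, Y ω ^ 2 ∂μ
        = ((m:ℝ)^2)⁻¹ * ∑ i, ∑ j, ∫ ω, ⟪W i ω, W j ω⟫ ∂μ := by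
      simp_rw [hYsq]
      rw [integral_const_mul]
      congr 1
      rw [integral_finset_sum _ (fun i _ => integrable_finset_sum _ (fun j _ => hpairint i j))]
      exact Finset.sum_congr rfl (fun i _ => integral_finset_sum _ (fun j _ => hpairint i j))
    have hdiag : ∀ i : Fin m, ∫ ω, ⟪W i ω, W i ω⟫ ∂μ ≤ 4 * D^2 := fun i => by
      have : ∀ᵐ ω ∂μ, ⟪W i ω, W i ω⟫ ≤ 4 * D^2 := by
        filter_upwards [hWbdd i] with ω h
        rw [real_inner_self_eq_norm_sq]
        nlinarith [norm_nonneg (W i ω)]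
      calc ∫ ω, ⟪W i ω, W i ω⟫ ∂μ ≤ ∫ _ω, 4 * D^2 ∂μ :=
            integral_mono_ae (hpairint i i) (integrable_const _) this
        _ = 4 * D^2 := by simp
    have hoff : ∀ i j : Fin m, i ≠ j → ∫ ω, ⟪W i ω, W j ω⟫ ∂μ = 0 := fun i j hij => by
      rw [indep_integral_inner (W i) (W j) (hWint i) (hWint j) (hWindep i j hij),
        hWmean i, hWmean j, inner_zero_left]
    have hrow : ∀ i : Fin m, ∑ j, ∫ ω, ⟪W i ω, W j ω⟫ ∂μ ≤ 4 * D^2 := fun i => by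
      rw [Finset.sum_eq_single i (fun j _ hj => hoff i j (Ne.symm hj)) (by simp)]
      exact hdiag i
    calc ∫ ω, Y ω ^ 2 ∂μ
        = ((m:ℝ)^2)⁻¹ * ∑ i, ∑ j, ∫ ω, ⟪W i ω, W j ω⟫ ∂μ := hsum
      _ ≤ ((m:ℝ)^2)⁻¹ * (m * (4 * D^2)) := by
          refine mul_le_mul_of_nonneg_left ?_ (by positivity)
          calc (∑ i, ∑ j, ∫ ω, ⟪W i ω, W j ω⟫ ∂μ) ≤ ∑ _i : Fin m, 4 * D^2 :=
                Finset.sum_le_sum (fun i _ => hrow i)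
            _ = m * (4 * D^2) := by simp [Finset.sum_const, nsmul_eq_mul]
      _ = 4 * D^2 / m := by field_simp
  -- Jensen / variance: (E Y)^2 ≤ E Y^2
  have hYmem : MemLp Y 2 μ :=
    (memLp_top_of_bound hYmeas.aestronglyMeasurable _ hYbdd).mono_exponent le_top
  have hvar : (∫ ω, Y ω ∂μ)^2 ≤ ∫ ω, Y ω ^ 2 ∂μ := by
    have h := variance_nonneg Y μ
    rw [variance_eq_sub hYmem] at h
    have : (∫ ω, (Y ^ 2) ω ∂μ) = ∫ ω, Y ω ^ 2 ∂μ := by rfl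
    linarith [h, this]
  have step2 : ∫ ω, Y ω ∂μ ≤ 2 * D / Real.sqrt m := by
    have h2 : (∫ ω, Y ω ∂μ)^2 ≤ 4 * D^2 / m := le_trans hvar hkey
    have h3 : ∫ ω, Y ω ∂μ ≤ Real.sqrt (4 * D^2 / m) := by
      rw [← Real.sqrt_sq hEY0]
      exact Real.sqrt_le_sqrt h2
    have h4 : Real.sqrt (4 * D^2 / m) = 2 * D / Real.sqrt m := by
      rw [show (4 * D^2 / m : ℝ) = (2*D)^2 / m by ring,
        Real.sqrt_div (by positivity) (m:ℝ), Real.sqrt_sq (by linarith)]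
    rw [← h4]; exact h3
  calc ∫ ω, ⟪gradient f (A ω), xhat - A ω⟫ ∂μ ≤ G * ∫ ω, Y ω ∂μ := step1
    _ ≤ G * (2 * D / Real.sqrt m) := mul_le_mul_of_nonneg_left step2 hG0
    _ = 2 * G * D / Real.sqrt m := by ring
end

section
/- (Vector-valued Azuma inequality, Pinelis.) Let (F_k)_{k=0}^K be a filtration on a probability space and let ν₁, …, ν_K be ℝ^d-valued random vectors such that ν_k is F_k-measurable, E[ν_k | F_{k−1}] = 0 almost surely, and ‖ν_k‖ ≤ c_k almost surely for constants c_k > 0. Then for every λ > 0, P(‖Σ_{k=1}^K ν_k‖ > λ) ≤ 2 exp(− λ² / (2 Σ_{k=1}^K c_k²)). -/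
open MeasureTheory


private lemma aux_sinh_le_mul_cosh {x : ℝ} (hx : 0 ≤ x) : Real.sinh x ≤ x * Real.cosh x := by
  have h : MonotoneOn (fun y : ℝ => y * Real.cosh y - Real.sinh y) (Set.Ici 0) := by
    apply monotoneOn_of_deriv_nonneg (convex_Ici 0)
    · exact (((continuous_id.mul Real.continuous_cosh).sub Real.continuous_sinh)).continuousOn
    · intro y hy
      exact (((hasDerivAt_id y).mul (Real.hasDerivAt_cosh y)).sub
        (Real.hasDerivAt_sinh y)).differentiableAt.differentiableWithinAt
    · intro y hy
      rw [interior_Ici] at hy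
      have hd : HasDerivAt (fun y : ℝ => y * Real.cosh y - Real.sinh y)
          (1 * Real.cosh y + y * Real.sinh y - Real.cosh y) y :=
        ((hasDerivAt_id y).mul (Real.hasDerivAt_cosh y)).sub (Real.hasDerivAt_sinh y)
      rw [hd.deriv]
      have : (0:ℝ) ≤ y * Real.sinh y :=
        mul_nonneg hy.le (Real.sinh_nonneg_iff.2 hy.le)
      linarith
  have := h (Set.mem_Ici.2 le_rfl) hx hx
  simpa using this

private lemma aux_sinh_ratio_mono : MonotoneOn (fun y : ℝ => Real.sinh y / y) (Set.Ioi 0) := by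
  apply monotoneOn_of_deriv_nonneg (convex_Ioi 0)
  · exact ContinuousOn.div Real.continuous_sinh.continuousOn continuousOn_id
      (fun y hy => ne_of_gt hy)
  · intro y hy
    rw [interior_Ioi] at hy
    exact ((Real.hasDerivAt_sinh y).div (hasDerivAt_id y) (ne_of_gt hy)).differentiableAt.differentiableWithinAt
  · intro y hy
    rw [interior_Ioi] at hy
    have hd : HasDerivAt (fun y : ℝ => Real.sinh y / y)
        ((Real.cosh y * y - Real.sinh y * 1) / y ^ 2) y :=
      (Real.hasDerivAt_sinh y).div (hasDerivAt_id y) (ne_of_gt hy)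
    rw [hd.deriv]
    apply div_nonneg _ (sq_nonneg y)
    have := aux_sinh_le_mul_cosh hy.le
    nlinarith




private lemma aux_coshsqrt_deriv {u : ℝ} (hu : 0 < u) :
    HasDerivAt (fun u : ℝ => Real.cosh (Real.sqrt u))
      (Real.sinh (Real.sqrt u) * (1 / (2 * Real.sqrt u))) u :=
  (Real.hasDerivAt_cosh (Real.sqrt u)).comp u (Real.hasDerivAt_sqrt (ne_of_gt hu))

private lemma aux_coshsqrt_convex :
    ConvexOn ℝ (Set.Ici 0) (fun u : ℝ => Real.cosh (Real.sqrt u)) := by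
  apply MonotoneOn.convexOn_of_deriv (convex_Ici 0)
  · exact (Real.continuous_cosh.comp Real.continuous_sqrt).continuousOn
  · rw [interior_Ici]
    intro u hu
    exact (aux_coshsqrt_deriv hu).differentiableAt.differentiableWithinAt
  · rw [interior_Ici]
    intro u hu v hv huv
    rw [(aux_coshsqrt_deriv hu).deriv, (aux_coshsqrt_deriv hv).deriv]
    have hsu : 0 < Real.sqrt u := Real.sqrt_pos.2 hu
    have hsv : 0 < Real.sqrt v := Real.sqrt_pos.2 hv
    have h := aux_sinh_ratio_mono hsu hsv (Real.sqrt_le_sqrt huv)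
    simp only at h
    rw [mul_one_div, mul_one_div]
    rw [div_le_div_iff₀ (by positivity) (by positivity)] at h ⊢
    nlinarith
private lemma convexOn_chord {f : ℝ → ℝ} {s : Set ℝ} (hf : ConvexOn ℝ s f) {a b u : ℝ}
    (ha : a ∈ s) (hb : b ∈ s) (hab : a < b) (h1 : a ≤ u) (h2 : u ≤ b) :
    f u ≤ f a + (f b - f a) * (u - a) / (b - a) := by
  have hba : 0 < b - a := by linarith
  set θ := (u - a) / (b - a) with hθ
  have hθ0 : 0 ≤ θ := div_nonneg (by linarith) hba.le
  have hθ1 : θ ≤ 1 := (div_le_one hba).2 (by linarith)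
  have hu : u = (1 - θ) * a + θ * b := by
    have h' : θ * (b - a) = u - a := div_mul_cancel₀ _ hba.ne'
    linear_combination -h'
  have h := hf.2 ha hb (by linarith : (0:ℝ) ≤ 1 - θ) hθ0 (by ring)
  rw [smul_eq_mul, smul_eq_mul, smul_eq_mul, smul_eq_mul, ← hu] at h
  calc f u ≤ (1 - θ) * f a + θ * f b := h
    _ = f a + (f b - f a) * (u - a) / (b - a) := by rw [hθ]; ring

private lemma key_pointwise {F : Type*} [NormedAddCommGroup F] [InnerProductSpace ℝ F]
    (x y : F) {c : ℝ} (hc : 0 < c) (hy : ‖y‖ ≤ c) :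
    Real.cosh ‖x + y‖ ≤ Real.cosh ‖x‖ * Real.cosh c
      + Real.sinh ‖x‖ * Real.sinh c / (‖x‖ * c) * (inner ℝ x y : ℝ) := by
  by_cases hx : x = 0
  · simp [hx]
    rw [abs_of_pos hc]
    exact hy
  · set r := ‖x‖ with hrdef
    have hr : 0 < r := norm_pos_iff.2 hx
    set ρ := (inner ℝ x y : ℝ) with hρdef
    have hρ : |ρ| ≤ r * c := (abs_real_inner_le_norm x y).trans
      (mul_le_mul_of_nonneg_left hy (norm_nonneg x))
    have hρ1 : -(r*c) ≤ ρ := neg_le_of_abs_le hρ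
    have hρ2 : ρ ≤ r*c := le_of_abs_le hρ
    set u := r^2 + c^2 + 2*ρ with hudef
    have hu0 : (r - c)^2 ≤ u := by nlinarith
    have hub : u ≤ (r + c)^2 := by nlinarith
    have hunn : 0 ≤ u := le_trans (sq_nonneg _) hu0
    have h1 : Real.cosh ‖x + y‖ ≤ Real.cosh (Real.sqrt u) := by
      rw [Real.cosh_le_cosh, abs_of_nonneg (norm_nonneg _), abs_of_nonneg (Real.sqrt_nonneg _)]
      rw [← Real.sqrt_sq (norm_nonneg (x+y))]
      apply Real.sqrt_le_sqrt
      have hn := norm_add_sq_real x y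
      nlinarith [norm_nonneg y]
    have h2 := convexOn_chord aux_coshsqrt_convex (sq_nonneg (r-c)) (sq_nonneg (r+c))
      (by nlinarith : (r-c)^2 < (r+c)^2) hu0 hub
    have ha : Real.cosh (Real.sqrt ((r-c)^2)) = Real.cosh (r - c) := by
      rw [Real.sqrt_sq_eq_abs, Real.cosh_abs]
    have hb : Real.cosh (Real.sqrt ((r+c)^2)) = Real.cosh (r + c) := by
      rw [Real.sqrt_sq_eq_abs, Real.cosh_abs]
    rw [ha, hb] at h2
    refine h1.trans (h2.trans (le_of_eq ?_))
    rw [Real.cosh_add, Real.cosh_sub]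
    have hbma : (r+c)^2 - (r-c)^2 = 4*(r*c) := by ring
    have huma : u - (r-c)^2 = 2*ρ + 2*(r*c) := by rw [hudef]; ring
    rw [hbma, huma]
    field_simp
    ring


private lemma euclid_coord_le {d : ℕ} (x : EuclideanSpace ℝ (Fin d)) (i : Fin d) :
    |x i| ≤ ‖x‖ := by
  rw [EuclideanSpace.norm_eq, ← Real.sqrt_sq (abs_nonneg (x i))]
  apply Real.sqrt_le_sqrt
  have := Finset.single_le_sum (f := fun j => ‖x j‖ ^ 2) (fun j _ => sq_nonneg _)
    (Finset.mem_univ i)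
  simpa [Real.norm_eq_abs, sq_abs] using this

private lemma integral_inner_zero {Ω : Type*} {m m0 : MeasurableSpace Ω} (hm : m ≤ m0)
    {μ : Measure Ω} [IsProbabilityMeasure μ] {d : ℕ}
    {Z ν : Ω → EuclideanSpace ℝ (Fin d)}
    (hZmeas : StronglyMeasurable[m] Z) {CZ : ℝ} (hZbdd : ∀ᵐ ω ∂μ, ‖Z ω‖ ≤ CZ)
    (hνmeas : AEStronglyMeasurable ν μ) {Cν : ℝ} (hνbdd : ∀ᵐ ω ∂μ, ‖ν ω‖ ≤ Cν)
    (hcond : μ[ν | m] =ᵐ[μ] 0) :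
    ∫ ω, (inner ℝ (Z ω) (ν ω) : ℝ) ∂μ = 0 := by
  haveI : IsFiniteMeasure (μ.trim hm) := isFiniteMeasure_trim hm
  haveI : SigmaFinite (μ.trim hm) := inferInstance
  have hνint : Integrable ν μ :=
    Integrable.mono' (integrable_const Cν) hνmeas hνbdd
  have hinner : ∀ ω, (inner ℝ (Z ω) (ν ω) : ℝ) = ∑ i, Z ω i * ν ω i := by
    intro ω
    simp [PiLp.inner_apply, RCLike.inner_apply, starRingEnd_apply, star_trivial]
    exact Finset.sum_congr rfl fun i _ => mul_comm _ _
  -- coordinate facts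
  have hZi : ∀ i, StronglyMeasurable[m] (fun ω => Z ω i) := fun i =>
    ((EuclideanSpace.proj (𝕜 := ℝ) i).continuous.comp_stronglyMeasurable hZmeas)
  have hνi_int : ∀ i : Fin d, Integrable (fun ω => ν ω i) μ := fun i =>
    (EuclideanSpace.proj (𝕜 := ℝ) i).integrable_comp hνint
  have hterm_int : ∀ i : Fin d, Integrable (fun ω => Z ω i * ν ω i) μ := by
    intro i
    apply Integrable.mono' (integrable_const (CZ * Cν))
    · exact (((hZi i).mono hm).aestronglyMeasurable).mul (hνi_int i).aestronglyMeasurable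
    · filter_upwards [hZbdd, hνbdd] with ω h1 h2
      have e1 : |Z ω i| ≤ CZ := (euclid_coord_le _ i).trans h1
      have e2 : |ν ω i| ≤ Cν := (euclid_coord_le _ i).trans h2
      have : ‖Z ω i * ν ω i‖ = |Z ω i| * |ν ω i| := by
        rw [Real.norm_eq_abs, abs_mul]
      rw [this]
      exact mul_le_mul e1 e2 (abs_nonneg _) ((abs_nonneg _).trans e1)
  have hcoord : ∀ i : Fin d, ∫ ω, Z ω i * ν ω i ∂μ = 0 := by
    intro i
    -- conditional expectation of coordinate is zero
    have hcondi : (0 : Ω → ℝ) =ᵐ[μ] μ[fun ω => ν ω i | m] := by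
      refine ae_eq_condExp_of_forall_setIntegral_eq hm (hνi_int i)
        (fun s _ _ => (integrable_const (0:ℝ)).integrableOn)
        (fun s hs hμs => ?_)
        (StronglyMeasurable.aestronglyMeasurable stronglyMeasurable_zero)
      have h2 : ∫ ω in s, ν ω ∂μ = 0 := by
        rw [← setIntegral_condExp hm hνint hs]
        calc ∫ ω in s, (μ[ν|m]) ω ∂μ
            = ∫ ω in s, (0 : EuclideanSpace ℝ (Fin d)) ∂μ :=
              integral_congr_ae (ae_restrict_of_ae hcond)
          _ = 0 := by simp
      have h1 : ∫ ω in s, ν ω i ∂μ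
          = (EuclideanSpace.proj (𝕜 := ℝ) i) (∫ ω in s, ν ω ∂μ) :=
        (EuclideanSpace.proj (𝕜 := ℝ) i).integral_comp_comm hνint.integrableOn
      rw [h1, h2]
      simp
    have hpull : μ[(fun ω => Z ω i) * (fun ω => ν ω i) | m]
        =ᵐ[μ] (fun ω => Z ω i) * μ[fun ω => ν ω i | m] := by
      apply condExp_stronglyMeasurable_mul_of_bound hm (hZi i) (hνi_int i) CZ
      filter_upwards [hZbdd] with ω h1
      exact (euclid_coord_le _ i).trans h1
    have : ∫ ω, Z ω i * ν ω i ∂μ = ∫ ω, (μ[(fun ω => Z ω i) * (fun ω => ν ω i)|m]) ω ∂μ :=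
      (integral_condExp hm).symm
    rw [this]
    have hzero : μ[(fun ω => Z ω i) * (fun ω => ν ω i)|m] =ᵐ[μ] 0 := by
      filter_upwards [hpull, hcondi.symm] with ω h1 h2
      simp only [Pi.mul_apply] at h1 ⊢
      rw [h1, h2]
      simp
    rw [integral_congr_ae hzero]
    simp
  calc ∫ ω, (inner ℝ (Z ω) (ν ω) : ℝ) ∂μ = ∫ ω, ∑ i, Z ω i * ν ω i ∂μ := by
        simp_rw [hinner]
    _ = ∑ i, ∫ ω, Z ω i * ν ω i ∂μ := integral_finset_sum _ (fun i _ => hterm_int i)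
    _ = 0 := by simp [hcoord]



private lemma aux_sinh_div_le_cosh {a : ℝ} (ha : 0 ≤ a) : Real.sinh a / a ≤ Real.cosh a := by
  rcases eq_or_lt_of_le ha with h | h
  · rw [← h]
    simp
  · rw [div_le_iff₀ h]
    have := aux_sinh_le_mul_cosh ha
    linarith

private lemma aux_cosh_mono {a b : ℝ} (ha : 0 ≤ a) (h : a ≤ b) :
    Real.cosh a ≤ Real.cosh b := by
  rw [Real.cosh_le_cosh, abs_of_nonneg ha, abs_of_nonneg (ha.trans h)]
  exact h



/-- Vector-valued Azuma inequality (Pinelis). For an `ℝ^d`-valued martingale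
difference sequence `ν₁, …, ν_K` adapted to a filtration, with conditional mean zero and
almost-sure norm bounds `‖ν_k‖ ≤ c_k`, for every `λ > 0`,
`P(‖Σ_k ν_k‖ > λ) ≤ 2 exp(−λ² / (2 Σ_k c_k²))`. -/
theorem pinelis_vector_azuma (d K : ℕ)
    {Ω : Type*} {m0 : MeasurableSpace Ω} (μ : Measure Ω) [IsProbabilityMeasure μ]
    (ℱ : Filtration ℕ m0)
    (ν : ℕ → Ω → EuclideanSpace ℝ (Fin d)) (c : ℕ → ℝ)
    (hc : ∀ k, 0 < c k)
    (hmeas : ∀ k, StronglyMeasurable[ℱ (k + 1)] (ν k))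
    (hmdiff : ∀ k, μ[ν k|ℱ k] =ᵐ[μ] 0)
    (hbdd : ∀ k, ∀ᵐ ω ∂μ, ‖ν k ω‖ ≤ c k) :
    ∀ lam : ℝ, 0 < lam →
      μ {ω | lam < ‖∑ k ∈ Finset.range K, ν k ω‖} ≤
        ENNReal.ofReal (2 * Real.exp (-lam ^ 2 / (2 * ∑ k ∈ Finset.range K, c k ^ 2))) := by
  intro lam hlam
  rcases Nat.eq_zero_or_pos K with hK | hK
  · subst hK
    have hempty : {ω | lam < ‖∑ k ∈ Finset.range 0, ν k ω‖} = ∅ := by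
      ext ω
      simp only [Finset.range_zero, Finset.sum_empty, norm_zero, Set.mem_setOf_eq,
        Set.mem_empty_iff_false, iff_false, not_lt]
      exact hlam.le
    rw [hempty]
    simp
  set sig2 : ℝ := ∑ k ∈ Finset.range K, c k ^ 2 with hsig2def
  have hsig2 : 0 < sig2 := Finset.sum_pos (fun k _ => pow_pos (hc k) 2)
    ⟨0, Finset.mem_range.2 hK⟩
  set t : ℝ := lam / sig2 with htdef
  have ht : 0 < t := div_pos hlam hsig2
  set S : ℕ → Ω → EuclideanSpace ℝ (Fin d) := fun n ω => ∑ k ∈ Finset.range n, ν k ω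
    with hSdef
  have hSmeas : ∀ n, StronglyMeasurable[ℱ n] (S n) := by
    intro n
    rw [hSdef]
    apply Finset.stronglyMeasurable_fun_sum
    intro k hk
    exact (hmeas k).mono (ℱ.mono (Finset.mem_range.1 hk))
  set B : ℕ → ℝ := fun n => ∑ k ∈ Finset.range n, c k with hBdef
  have hB : ∀ n, 0 ≤ B n := fun n => Finset.sum_nonneg fun k _ => (hc k).le
  have hSbdd : ∀ n, ∀ᵐ ω ∂μ, ‖S n ω‖ ≤ B n := by
    intro n
    filter_upwards [ae_all_iff.2 hbdd] with ω h
    calc ‖S n ω‖ ≤ ∑ k ∈ Finset.range n, ‖ν k ω‖ := norm_sum_le _ _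
      _ ≤ B n := Finset.sum_le_sum fun k _ => h k
  set φ : ℕ → Ω → ℝ := fun n ω => Real.cosh (t * ‖S n ω‖) with hφdef
  have hφmeas : ∀ n, AEStronglyMeasurable (φ n) μ := by
    intro n
    have h1 : AEStronglyMeasurable (S n) μ :=
      ((hSmeas n).mono (ℱ.le n)).aestronglyMeasurable
    exact Real.continuous_cosh.comp_aestronglyMeasurable (h1.norm.const_mul t)
  have hφint : ∀ n, Integrable (φ n) μ := by
    intro n
    apply Integrable.mono' (integrable_const (Real.cosh (t * B n))) (hφmeas n)
    filter_upwards [hSbdd n] with ω h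
    simp only [hφdef]
    rw [Real.norm_eq_abs, abs_of_pos (Real.cosh_pos _)]
    exact aux_cosh_mono (by positivity) (mul_le_mul_of_nonneg_left h ht.le)
  have hstep : ∀ n, ∫ ω, φ (n+1) ω ∂μ ≤ Real.cosh (t * c n) * ∫ ω, φ n ω ∂μ := by
    intro n
    have htc : 0 < t * c n := mul_pos ht (hc n)
    set g : EuclideanSpace ℝ (Fin d) → ℝ := fun x =>
      Real.sinh (t * ‖x‖) * Real.sinh (t * c n) / ((t * ‖x‖) * (t * c n)) * (t * t)
      with hgdef
    have hgmeas : Measurable g := by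
      apply Measurable.mul _ measurable_const
      apply Measurable.div
      · exact ((Real.continuous_sinh.comp
          (continuous_const.mul continuous_norm)).measurable).mul measurable_const
      · exact ((continuous_const.mul continuous_norm).mul continuous_const).measurable
    have hgbound : ∀ x : EuclideanSpace ℝ (Fin d),
        |g x| ≤ Real.cosh (t * ‖x‖) * Real.cosh (t * c n) * (t * t) := by
      intro x
      have hx0 : (0:ℝ) ≤ t * ‖x‖ := by positivity
      have hgx : g x = (Real.sinh (t*‖x‖)/(t*‖x‖)) * (Real.sinh (t*c n)/(t*c n)) * (t*t) := by
        simp only [hgdef]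
        ring
      have h2 : Real.sinh (t*‖x‖)/(t*‖x‖) ≤ Real.cosh (t*‖x‖) := aux_sinh_div_le_cosh hx0
      have h3 : Real.sinh (t*c n)/(t*c n) ≤ Real.cosh (t*c n) := aux_sinh_div_le_cosh htc.le
      have h4 : 0 ≤ Real.sinh (t*‖x‖)/(t*‖x‖) :=
        div_nonneg (Real.sinh_nonneg_iff.2 hx0) hx0
      have h5 : 0 ≤ Real.sinh (t*c n)/(t*c n) :=
        div_nonneg (Real.sinh_nonneg_iff.2 htc.le) htc.le
      rw [hgx, abs_of_nonneg (mul_nonneg (mul_nonneg h4 h5) (by positivity))]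
      apply mul_le_mul_of_nonneg_right _ (by positivity : (0:ℝ) ≤ t*t)
      exact mul_le_mul h2 h3 h5 (Real.cosh_pos _).le
    set Z : Ω → EuclideanSpace ℝ (Fin d) := fun ω => g (S n ω) • S n ω with hZdef
    have hZmeas : StronglyMeasurable[ℱ n] Z := by
      have hSm : Measurable[ℱ n] (S n) := (hSmeas n).measurable
      exact ((hgmeas.comp hSm).stronglyMeasurable).smul (hSmeas n)
    set CZ : ℝ := Real.cosh (t * B n) * Real.cosh (t * c n) * (t * t) * B n with hCZdef
    have hZbdd : ∀ᵐ ω ∂μ, ‖Z ω‖ ≤ CZ := by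
      filter_upwards [hSbdd n] with ω h
      calc ‖Z ω‖ = |g (S n ω)| * ‖S n ω‖ := by rw [hZdef, norm_smul, Real.norm_eq_abs]
        _ ≤ (Real.cosh (t * ‖S n ω‖) * Real.cosh (t * c n) * (t*t)) * B n :=
            mul_le_mul (hgbound _) h (norm_nonneg _) (by positivity)
        _ ≤ CZ := by
            rw [hCZdef]
            apply mul_le_mul_of_nonneg_right _ (hB n)
            apply mul_le_mul_of_nonneg_right _ (by positivity : (0:ℝ) ≤ t*t)
            apply mul_le_mul_of_nonneg_right _ (Real.cosh_pos _).le
            exact aux_cosh_mono (by positivity) (mul_le_mul_of_nonneg_left h ht.le)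
    have hνAE : AEStronglyMeasurable (ν n) μ :=
      ((hmeas n).mono (ℱ.le (n+1))).aestronglyMeasurable
    have hpt : ∀ᵐ ω ∂μ, φ (n+1) ω
        ≤ φ n ω * Real.cosh (t * c n) + (inner ℝ (Z ω) (ν n ω) : ℝ) := by
      filter_upwards [hbdd n] with ω hω
      have hSs : S (n+1) ω = S n ω + ν n ω := Finset.sum_range_succ _ _
      have key := key_pointwise (t • S n ω) (t • ν n ω) htc (by
        rw [norm_smul, Real.norm_eq_abs, abs_of_pos ht]
        exact mul_le_mul_of_nonneg_left hω ht.le)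
      have e1 : ‖t • S n ω + t • ν n ω‖ = t * ‖S (n+1) ω‖ := by
        rw [hSs, ← smul_add, norm_smul, Real.norm_eq_abs, abs_of_pos ht]
      have e2 : ‖t • S n ω‖ = t * ‖S n ω‖ := by
        rw [norm_smul, Real.norm_eq_abs, abs_of_pos ht]
      have e3 : (inner ℝ (t • S n ω) (t • ν n ω) : ℝ)
          = (t*t) * (inner ℝ (S n ω) (ν n ω) : ℝ) := by
        rw [real_inner_smul_left, real_inner_smul_right]
        ring
      rw [e1, e2, e3] at key
      have e4 : (inner ℝ (Z ω) (ν n ω) : ℝ)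
          = g (S n ω) * (inner ℝ (S n ω) (ν n ω) : ℝ) := by
        rw [hZdef]
        exact real_inner_smul_left _ _ _
      show Real.cosh (t * ‖S (n+1) ω‖)
        ≤ Real.cosh (t * ‖S n ω‖) * Real.cosh (t * c n) + (inner ℝ (Z ω) (ν n ω) : ℝ)
      rw [e4, hgdef]
      calc Real.cosh (t * ‖S (n+1) ω‖)
          ≤ Real.cosh (t * ‖S n ω‖) * Real.cosh (t * c n)
            + Real.sinh (t * ‖S n ω‖) * Real.sinh (t * c n) / ((t * ‖S n ω‖) * (t * c n))
              * ((t*t) * (inner ℝ (S n ω) (ν n ω) : ℝ)) := key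
        _ = _ := by ring
    have hinner_int : Integrable (fun ω => (inner ℝ (Z ω) (ν n ω) : ℝ)) μ := by
      apply Integrable.mono' (integrable_const (CZ * c n))
      · exact AEStronglyMeasurable.inner ((hZmeas.mono (ℱ.le n)).aestronglyMeasurable) hνAE
      · filter_upwards [hZbdd, hbdd n] with ω h1 h2
        calc ‖(inner ℝ (Z ω) (ν n ω) : ℝ)‖ ≤ ‖Z ω‖ * ‖ν n ω‖ := by
              rw [Real.norm_eq_abs]; exact abs_real_inner_le_norm _ _
          _ ≤ CZ * c n := mul_le_mul h1 h2 (norm_nonneg _) ((norm_nonneg _).trans h1)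
    have hint0 : ∫ ω, (inner ℝ (Z ω) (ν n ω) : ℝ) ∂μ = 0 :=
      integral_inner_zero (ℱ.le n) hZmeas hZbdd hνAE (hbdd n) (hmdiff n)
    calc ∫ ω, φ (n+1) ω ∂μ
        ≤ ∫ ω, (φ n ω * Real.cosh (t * c n) + (inner ℝ (Z ω) (ν n ω) : ℝ)) ∂μ :=
          integral_mono_ae (hφint (n+1)) (((hφint n).mul_const _).add hinner_int) hpt
      _ = (∫ ω, φ n ω ∂μ) * Real.cosh (t * c n) + ∫ ω, (inner ℝ (Z ω) (ν n ω) : ℝ) ∂μ := by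
          rw [integral_add ((hφint n).mul_const _) hinner_int, integral_mul_const]
      _ = Real.cosh (t * c n) * ∫ ω, φ n ω ∂μ := by rw [hint0]; ring
  have hmain : ∀ n, ∫ ω, φ n ω ∂μ ≤ ∏ k ∈ Finset.range n, Real.cosh (t * c k) := by
    intro n
    induction n with
    | zero => simp [hφdef, hSdef]
    | succ n ih =>
      calc ∫ ω, φ (n+1) ω ∂μ ≤ Real.cosh (t * c n) * ∫ ω, φ n ω ∂μ := hstep n
        _ ≤ Real.cosh (t * c n) * ∏ k ∈ Finset.range n, Real.cosh (t * c k) :=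
            mul_le_mul_of_nonneg_left ih (Real.cosh_pos _).le
        _ = ∏ k ∈ Finset.range (n+1), Real.cosh (t * c k) := by
            rw [Finset.prod_range_succ]; ring
  -- Markov step
  have hsub : {ω | lam < ‖S K ω‖} ⊆ {ω | Real.cosh (t*lam) ≤ φ K ω} := by
    intro ω h
    exact aux_cosh_mono (by positivity) (mul_le_mul_of_nonneg_left (le_of_lt h) ht.le)
  have hck := mul_meas_ge_le_integral_of_nonneg (μ := μ) (f := φ K)
    (ae_of_all μ fun ω => (Real.cosh_pos _).le) (hφint K) (Real.cosh (t*lam))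
  have hcoshpos : (0:ℝ) < Real.cosh (t*lam) := Real.cosh_pos _
  have hprod_le : ∏ k ∈ Finset.range K, Real.cosh (t * c k) ≤ Real.exp (t^2 * sig2 / 2) := by
    calc ∏ k ∈ Finset.range K, Real.cosh (t * c k)
        ≤ ∏ k ∈ Finset.range K, Real.exp ((t * c k)^2/2) :=
          Finset.prod_le_prod (fun k _ => (Real.cosh_pos _).le)
            (fun k _ => Real.cosh_le_exp_half_sq _)
      _ = Real.exp (∑ k ∈ Finset.range K, (t * c k)^2/2) := (Real.exp_sum _ _).symm
      _ = Real.exp (t^2 * sig2 / 2) := by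
          congr 1
          rw [hsig2def, Finset.mul_sum, ← Finset.sum_div]
          congr 1
          apply Finset.sum_congr rfl
          intros k _
          ring
  have hAs : t^2 * sig2 / 2 - t * lam = -lam^2 / (2*sig2) := by
    rw [htdef]
    field_simp
    ring
  have h4 : Real.exp (t^2 * sig2 / 2) ≤ 2 * Real.exp (-lam^2/(2*sig2)) * Real.cosh (t*lam) := by
    rw [← hAs, Real.cosh_eq]
    calc Real.exp (t^2*sig2/2) = Real.exp ((t^2*sig2/2 - t*lam) + t*lam) := by ring_nf
      _ ≤ Real.exp ((t^2*sig2/2 - t*lam) + t*lam)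
          + Real.exp ((t^2*sig2/2 - t*lam) + -(t*lam)) :=
            le_add_of_nonneg_right (Real.exp_pos _).le
      _ = 2 * Real.exp (t^2*sig2/2 - t*lam) * ((Real.exp (t*lam) + Real.exp (-(t*lam)))/2) := by
          rw [Real.exp_add, Real.exp_add]; ring
  have hfin : (μ {ω | lam < ‖S K ω‖}).toReal ≤ 2 * Real.exp (-lam^2/(2*sig2)) := by
    have h1 : (μ {ω | lam < ‖S K ω‖}).toReal
        ≤ (μ {ω | Real.cosh (t*lam) ≤ φ K ω}).toReal :=
      ENNReal.toReal_mono (measure_ne_top _ _) (measure_mono hsub)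
    have h2 : (μ {ω | Real.cosh (t*lam) ≤ φ K ω}).toReal
        ≤ (∫ ω, φ K ω ∂μ) / Real.cosh (t*lam) := by
      rw [le_div_iff₀ hcoshpos]
      rw [measureReal_def] at hck
      linarith [hck]
    have h3 : (∫ ω, φ K ω ∂μ) / Real.cosh (t*lam) ≤ 2 * Real.exp (-lam^2/(2*sig2)) := by
      rw [div_le_iff₀ hcoshpos]
      calc ∫ ω, φ K ω ∂μ ≤ Real.exp (t^2 * sig2 / 2) := (hmain K).trans hprod_le
        _ ≤ 2 * Real.exp (-lam^2/(2*sig2)) * Real.cosh (t*lam) := h4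
    linarith
  have hsetEq : {ω | lam < ‖∑ k ∈ Finset.range K, ν k ω‖} = {ω | lam < ‖S K ω‖} := rfl
  rw [hsetEq]
  calc μ {ω | lam < ‖S K ω‖}
      = ENNReal.ofReal ((μ {ω | lam < ‖S K ω‖}).toReal) :=
        (ENNReal.ofReal_toReal (measure_ne_top μ _)).symm
    _ ≤ ENNReal.ofReal (2 * Real.exp (-lam^2/(2*sig2))) := ENNReal.ofReal_le_ofReal hfin
end
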